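/- arXiv:q-bio/0402015 — 5 statements merged into one kernel-verified Lean document; each statement's English description precedes it below -/
import Mathlib

section
/- Let T be a finite rooted tree with a friendly labeling function L : G → 𝓛, let v be an interior vertex of T with incident edges e_1,…,e_c, and let g = Π_{i=1}^d q_{(l_i^1,…,l_i^c)} − Π_{i=1}^d q_{(m_i^1,…,m_i^c)} be a binomial in the toric ideal I_{T_v,L} of the claw tree T_v at v. For each row i and column j, let L_i^j ∈ im(L^{T_{v,e_j}}, l_i^j) and M_i^j ∈ im(L^{T_{v,e_j}}, m_i^j) be consistent labelings such that, for each j, the multisets {L_i^j : 1 ≤ i ≤ d} and {M_i^j : 1 ≤ i ≤ d} coincide. Then each assembled labeling λ_i (restricting to L_i^j on T_{v,e_j} for every j) and μ_i (restricting to M_i^j on T_{v,e_j} for every j) is a consistent labeling of T, and the binomial g* = Π_{i=1}^d q_{λ_i} − Π_{i=1}^d q_{μ_i} lies in the toric ideal I_{T,L}. -/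
open MvPolynomial

attribute [local instance] Classical.propDecidable

/-- The set `Z_m ⊆ G^m` of tuples with `g_1 + ⋯ + g_{m-1} = g_m`. -/
def ZSet (G : Type) [AddCommGroup G] (m : ℕ) : Set (Fin m → G) :=
  {g | (∑ i ∈ Finset.univ.filter fun i : Fin m => (i : ℕ) < m - 1, g i) =
       ∑ i ∈ Finset.univ.filter fun i : Fin m => ¬ (i : ℕ) < m - 1, g i}

/-- A labeling function `L : G → 𝓛` is `m`-friendly if for every tuple in `Z_m`, every
value with the same label at a coordinate can be realized at that coordinate by another
tuple in `Z_m` with the same label vector. -/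
def IsMFriendly {G 𝓛 : Type} [AddCommGroup G] (L : G → 𝓛) (m : ℕ) : Prop :=
  ∀ g ∈ ZSet G m, ∀ i : Fin m, ∀ h : G, L h = L (g i) →
    ∃ g' ∈ ZSet G m, (∀ j, L (g' j) = L (g j)) ∧ g' i = h

/-- A labeling function is friendly if it is `m`-friendly for all `m ≥ 3`. -/
def Friendly {G 𝓛 : Type} [AddCommGroup G] (L : G → 𝓛) : Prop :=
  ∀ m, 3 ≤ m → IsMFriendly L m

/-- A finite rooted tree, given by a parent function on a finite vertex set. -/
structure PhyloTree where
  V : Type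
  fintypeV : Fintype V
  root : V
  parent : V → V
  parent_root : parent root = root
  reaches_root : ∀ v, ∃ n : ℕ, parent^[n] v = root

attribute [instance] PhyloTree.fintypeV

namespace PhyloTree

variable (T : PhyloTree)

/-- A vertex is a leaf if it has no children. -/
def IsLeaf (v : T.V) : Prop := ∀ u, T.parent u = v → u = v

/-- The type of leaves of `T`. -/
def Leaf : Type := {v : T.V // T.IsLeaf v}

noncomputable instance : Fintype T.Leaf :=
  have : DecidablePred T.IsLeaf := Classical.decPred _
  Subtype.fintype _

/-- `u` is a (weak) descendant of `v`. -/
def Desc (u v : T.V) : Prop := ∃ n : ℕ, T.parent^[n] u = v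

/-- The edges of `T` are indexed by its vertices: a vertex `v` indexes the edge from
`parent v` to `v`, and the root indexes the extra pendant root edge `e_r`.
`leavesBelow v` is the set `Λ(e)` of leaves below the edge indexed by `v`. -/
noncomputable def leavesBelow (v : T.V) : Finset T.Leaf :=
  Finset.univ.filter fun l => T.Desc l.1 v

/-- An edge is interior if its lower endpoint is neither a leaf nor the root
(the latter excluding the pendant root edge). -/
def InteriorEdge (e : T.V) : Prop := ¬ T.IsLeaf e ∧ e ≠ T.root

/-- The edge set of the subtree `T_{e,-}`: the edge `e` together with all edges below it. -/
def Eminus (e : T.V) : Set T.V := {e' | T.Desc e' e}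

/-- The edge set of the subtree `T_{e,+}`: the edge `e` together with all edges not in `T_{e,-}`. -/
def Eplus (e : T.V) : Set T.V := {e' | e' = e ∨ ¬ T.Desc e' e}

theorem mem_Eminus_self (e : T.V) : e ∈ T.Eminus e := ⟨0, rfl⟩

theorem mem_Eplus_self (e : T.V) : e ∈ T.Eplus e := Or.inl rfl

variable {G 𝓛 : Type} [AddCommGroup G] [Fintype G]

/-- `g(e)`: the sum of the group elements at the leaves below the edge `e`. -/
noncomputable def gsum (g : T.Leaf → G) (e : T.V) : G := ∑ l ∈ T.leavesBelow e, g l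

/-- The consistent labelings of the subtree with edge set `S`. -/
def consLab (L : G → 𝓛) (S : Set T.V) : Set (↥S → 𝓛) :=
  Set.range fun g : T.Leaf → G => fun e' : ↥S => L (T.gsum g e'.1)

/-- The consistent labelings of the whole tree `T`, i.e. the image of `L^T`. -/
def consLabFull (L : G → 𝓛) : Set (T.V → 𝓛) :=
  Set.range fun g : T.Leaf → G => fun e : T.V => L (T.gsum g e)

/-- The toric ideal of the subtree with edge set `S` (in Fourier coordinates `q_λ`,
`λ` a consistent labeling): the kernel of the monomial map `q_λ ↦ ∏_e a^{(e)}_{λ(e)}`. -/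
noncomputable def toricIdeal (L : G → 𝓛) (S : Set T.V) :
    Ideal (MvPolynomial ↥(T.consLab L S) ℂ) :=
  RingHom.ker (aeval (R := ℂ)
    fun μ : ↥(T.consLab L S) => ∏ e' : ↥S, (X (e', μ.1 e') : MvPolynomial (↥S × 𝓛) ℂ))

/-- The toric ideal `I_{T,L}` of the tree `T`. -/
noncomputable def toricIdealFull (L : G → 𝓛) :
    Ideal (MvPolynomial ↥(T.consLabFull L) ℂ) :=
  RingHom.ker (aeval (R := ℂ)
    fun μ : ↥(T.consLabFull L) => ∏ e : T.V, (X (e, μ.1 e) : MvPolynomial (T.V × 𝓛) ℂ))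

/-- Glue a labeling of `T_{e,-}` and a labeling of `T_{e,+}` into a labeling of `T`. -/
noncomputable def glue (e : T.V) (μ : ↥(T.Eminus e) → 𝓛) (ν : ↥(T.Eplus e) → 𝓛) :
    T.V → 𝓛 :=
  fun e' => if h : T.Desc e' e then μ ⟨e', h⟩ else ν ⟨e', Or.inr h⟩

/-- `mix e λ₁ λ₂` agrees with `λ₁` on `T_{e,-}` and with `λ₂` on the rest of `T`. -/
noncomputable def mix (e : T.V) (f g : T.V → 𝓛) : T.V → 𝓛 :=
  fun e' => if T.Desc e' e then f e' else g e'

end PhyloTree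

/-- A binomial: a difference of two monic monomials. -/
def IsBinom {σ : Type} (p : MvPolynomial σ ℂ) : Prop :=
  ∃ (d : ℕ) (r r' : Fin d → σ), p = (∏ i, X (r i)) - ∏ i, X (r' i)

namespace PhyloTree

variable (T : PhyloTree) {G 𝓛 : Type} [AddCommGroup G] [Fintype G]

/-- The children of a vertex `v`. -/
def children (v : T.V) : Set T.V := {u | T.parent u = v ∧ u ≠ v}

/-- The edges incident to a vertex `v`: the edge above `v` (indexed by `v` itself)
together with the edges above the children of `v`. -/
def incident (v : T.V) : Set T.V := {u | u = v ∨ (T.parent u = v ∧ u ≠ v)}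

theorem mem_children_of_incident {v : T.V} (u : ↥(T.incident v)) (h : u.1 ≠ v) :
    u.1 ∈ T.children v := by
  rcases u.2 with h' | h'
  · exact absurd h' h
  · exact h'

/-- The consistent labelings of the claw tree `T_v` at an interior vertex `v`:
the child edges receive arbitrary group elements, and the edge towards the root
receives their sum; then apply `L`. -/
noncomputable def consLabClaw (L : G → 𝓛) (v : T.V) : Set (↥(T.incident v) → 𝓛) :=
  Set.range fun g : ↥(T.children v) → G =>
    fun u : ↥(T.incident v) =>
      if h : u.1 = v then L (∑ c : ↥(T.children v), g c)
      else L (g ⟨u.1, T.mem_children_of_incident u h⟩)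

/-- The toric ideal `I_{T_v,L}` of the claw tree at `v`. -/
noncomputable def clawIdeal (L : G → 𝓛) (v : T.V) :
    Ideal (MvPolynomial ↥(T.consLabClaw L v) ℂ) :=
  RingHom.ker (aeval (R := ℂ) fun μ : ↥(T.consLabClaw L v) =>
    ∏ u : ↥(T.incident v), (X (u, μ.1 u) : MvPolynomial (↥(T.incident v) × 𝓛) ℂ))

/-- The edge set of the subtree `T_{v,e}` hanging off the vertex `v` at the incident
edge `e`: the one of `T_{e,-}`, `T_{e,+}` which has `v` as a leaf. -/
def sideSet (v : T.V) (u : ↥(T.incident v)) : Set T.V :=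
  if u.1 = v then T.Eplus v else T.Eminus u.1

theorem mem_sideSet (v : T.V) (u : ↥(T.incident v)) : u.1 ∈ T.sideSet v u := by
  unfold sideSet
  split_ifs with h
  · exact Or.inl h
  · exact ⟨0, rfl⟩

/-- The set `Quad(e,T)` of quadratic binomials associated to an interior edge `e`. -/
noncomputable def QuadSet (L : G → 𝓛) (e : T.V) :
    Set (MvPolynomial ↥(T.consLabFull L) ℂ) :=
  {p | ∃ l1 l2 : ↥(T.consLabFull L), l1.1 e = l2.1 e ∧
    ∃ (h3 : T.mix e l1.1 l2.1 ∈ T.consLabFull L) (h4 : T.mix e l2.1 l1.1 ∈ T.consLabFull L),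
      p = X l1 * X l2 -
          X (⟨T.mix e l1.1 l2.1, h3⟩ : ↥(T.consLabFull L)) *
          X (⟨T.mix e l2.1 l1.1, h4⟩ : ↥(T.consLabFull L))}

/-- `Ext(𝓑 → T)` for a set `𝓑` of binomials in `I_{T_{e,-},L}`. -/
noncomputable def ExtMinus (L : G → 𝓛) (e : T.V)
    (B : Set (MvPolynomial ↥(T.consLab L (T.Eminus e)) ℂ)) :
    Set (MvPolynomial ↥(T.consLabFull L) ℂ) :=
  {p | ∃ (d : ℕ) (r r' : Fin d → ↥(T.consLab L (T.Eminus e)))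
        (s : Fin d → ↥(T.consLab L (T.Eplus e))),
      ((∏ i, X (r i)) - ∏ i, X (r' i)) ∈ B ∧
      (∀ i, (r i).1 ⟨e, T.mem_Eminus_self e⟩ = (r' i).1 ⟨e, T.mem_Eminus_self e⟩) ∧
      (∀ i, (s i).1 ⟨e, T.mem_Eplus_self e⟩ = (r i).1 ⟨e, T.mem_Eminus_self e⟩) ∧
      ∃ (h : ∀ i, T.glue e (r i).1 (s i).1 ∈ T.consLabFull L)
        (h' : ∀ i, T.glue e (r' i).1 (s i).1 ∈ T.consLabFull L),
        p = (∏ i, X (⟨T.glue e (r i).1 (s i).1, h i⟩ : ↥(T.consLabFull L))) -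
            ∏ i, X (⟨T.glue e (r' i).1 (s i).1, h' i⟩ : ↥(T.consLabFull L))}

/-- `Ext(T ← 𝓑)` for a set `𝓑` of binomials in `I_{T_{e,+},L}`. -/
noncomputable def ExtPlus (L : G → 𝓛) (e : T.V)
    (B : Set (MvPolynomial ↥(T.consLab L (T.Eplus e)) ℂ)) :
    Set (MvPolynomial ↥(T.consLabFull L) ℂ) :=
  {p | ∃ (d : ℕ) (s s' : Fin d → ↥(T.consLab L (T.Eplus e)))
        (r : Fin d → ↥(T.consLab L (T.Eminus e))),
      ((∏ i, X (s i)) - ∏ i, X (s' i)) ∈ B ∧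
      (∀ i, (s i).1 ⟨e, T.mem_Eplus_self e⟩ = (s' i).1 ⟨e, T.mem_Eplus_self e⟩) ∧
      (∀ i, (r i).1 ⟨e, T.mem_Eminus_self e⟩ = (s i).1 ⟨e, T.mem_Eplus_self e⟩) ∧
      ∃ (h : ∀ i, T.glue e (r i).1 (s i).1 ∈ T.consLabFull L)
        (h' : ∀ i, T.glue e (r i).1 (s' i).1 ∈ T.consLabFull L),
        p = (∏ i, X (⟨T.glue e (r i).1 (s i).1, h i⟩ : ↥(T.consLabFull L))) -
            ∏ i, X (⟨T.glue e (r i).1 (s' i).1, h' i⟩ : ↥(T.consLabFull L))}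

/-- `Ext(𝓑 → T)` for a set `𝓑` of binomials in the claw-tree ideal `I_{T_v,L}`. -/
noncomputable def ExtClaw (L : G → 𝓛) (v : T.V)
    (B : Set (MvPolynomial ↥(T.consLabClaw L v) ℂ)) :
    Set (MvPolynomial ↥(T.consLabFull L) ℂ) :=
  {p | ∃ (d : ℕ) (r r' : Fin d → ↥(T.consLabClaw L v))
        (Lf Mf : ∀ _ : Fin d, ∀ u : ↥(T.incident v), ↥(T.sideSet v u) → 𝓛)
        (lam mu : Fin d → T.V → 𝓛),
      ((∏ i, X (r i)) - ∏ i, X (r' i)) ∈ B ∧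
      (∀ i u, Lf i u ∈ T.consLab L (T.sideSet v u)) ∧
      (∀ i u, Lf i u ⟨u.1, T.mem_sideSet v u⟩ = (r i).1 u) ∧
      (∀ i u, Mf i u ∈ T.consLab L (T.sideSet v u)) ∧
      (∀ i u, Mf i u ⟨u.1, T.mem_sideSet v u⟩ = (r' i).1 u) ∧
      (∀ u, Multiset.map (fun i => Lf i u) Finset.univ.val
          = Multiset.map (fun i => Mf i u) Finset.univ.val) ∧
      (∀ i u e' (h : e' ∈ T.sideSet v u), lam i e' = Lf i u ⟨e', h⟩) ∧
      (∀ i u e' (h : e' ∈ T.sideSet v u), mu i e' = Mf i u ⟨e', h⟩) ∧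
      ∃ (hl : ∀ i, lam i ∈ T.consLabFull L) (hm : ∀ i, mu i ∈ T.consLabFull L),
        p = (∏ i, X (⟨lam i, hl i⟩ : ↥(T.consLabFull L))) -
            ∏ i, X (⟨mu i, hm i⟩ : ↥(T.consLabFull L))}

end PhyloTree

namespace PhyloTree

variable {T : PhyloTree}

theorem aux_desc_refl (a : T.V) : T.Desc a a := ⟨0, rfl⟩

theorem aux_desc_trans {a b c : T.V} (h1 : T.Desc a b) (h2 : T.Desc b c) : T.Desc a c := by
  obtain ⟨m, hm⟩ := h1; obtain ⟨n, hn⟩ := h2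
  exact ⟨n + m, by rw [Function.iterate_add_apply, hm, hn]⟩

theorem aux_iterate_root (n : ℕ) : T.parent^[n] T.root = T.root := by
  induction n with
  | zero => rfl
  | succ n ih => rw [Function.iterate_succ_apply', ih, T.parent_root]

theorem aux_periodic_eq_root {w : T.V} {p : ℕ} (hp : 1 ≤ p) (h : T.parent^[p] w = w) :
    w = T.root := by
  obtain ⟨N, hN⟩ := T.reaches_root w
  have key : ∀ k : ℕ, T.parent^[p * k] w = w := by
    intro k
    induction k with
    | zero => rfl
    | succ k ih => rw [Nat.mul_succ, Function.iterate_add_apply, h, ih]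
  have h1 : T.parent^[p * N] w = w := key N
  have h2 : p * N = (p * N - N) + N := by
    have : N ≤ p * N := Nat.le_mul_of_pos_left N hp
    omega
  rw [h2, Function.iterate_add_apply, hN, aux_iterate_root] at h1
  exact h1.symm

theorem aux_desc_antisymm {a b : T.V} (h1 : T.Desc a b) (h2 : T.Desc b a) : a = b := by
  obtain ⟨m, hm⟩ := h1; obtain ⟨n, hn⟩ := h2
  rcases Nat.eq_zero_or_pos (n + m) with h | h
  · have : m = 0 := by omega
    simpa [this] using hm
  · have hper : T.parent^[n + m] a = a := by rw [Function.iterate_add_apply, hm, hn]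
    have ha : a = T.root := aux_periodic_eq_root h hper
    have hb : b = T.root := by rw [← hm, ha, aux_iterate_root]
    rw [ha, hb]

theorem aux_comparable {l u w : T.V} (h1 : T.Desc l u) (h2 : T.Desc l w) :
    T.Desc u w ∨ T.Desc w u := by
  obtain ⟨a, ha⟩ := h1; obtain ⟨b, hb⟩ := h2
  rcases Nat.le_total a b with h | h
  · left; exact ⟨b - a, by rw [← ha, ← Function.iterate_add_apply, Nat.sub_add_cancel h, hb]⟩
  · right; exact ⟨a - b, by rw [← hb, ← Function.iterate_add_apply, Nat.sub_add_cancel h, ha]⟩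

theorem aux_desc_leaf {e e' : T.V} (he : T.IsLeaf e) (h : T.Desc e' e) : e' = e := by
  obtain ⟨n, hn⟩ := h
  induction n generalizing e' with
  | zero => exact hn
  | succ n ih =>
    rw [Function.iterate_succ_apply'] at hn
    exact ih (he _ hn)

theorem aux_exists_child {e : T.V} (he : ¬ T.IsLeaf e) : ∃ c, T.parent c = e ∧ c ≠ e := by
  unfold IsLeaf at he; push_neg at he; obtain ⟨c, h1, h2⟩ := he; exact ⟨c, h1, h2⟩

theorem aux_desc_child {e e' : T.V} (h : T.Desc e' e) (hne : e' ≠ e) :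
    ∃ c, T.parent c = e ∧ c ≠ e ∧ T.Desc e' c := by
  obtain ⟨n, hn⟩ := h
  induction n generalizing e' with
  | zero => exact absurd hn hne
  | succ n ih =>
    rw [Function.iterate_succ_apply'] at hn
    by_cases hc : T.parent^[n] e' = e
    · exact ih hne hc
    · exact ⟨T.parent^[n] e', hn, hc, ⟨n, rfl⟩⟩

theorem aux_child_unique {e c c' l : T.V} (hc : T.parent c = e) (hc1 : c ≠ e)
    (hc' : T.parent c' = e) (hc'1 : c' ≠ e) (h1 : T.Desc l c) (h2 : T.Desc l c') : c = c' := by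
  have hcomp := aux_comparable h1 h2
  wlog hcc : T.Desc c c' generalizing c c'
  · exact (this hc' hc'1 hc hc1 h2 h1 hcomp.symm (hcomp.resolve_left hcc)).symm
  obtain ⟨n, hn⟩ := hcc
  match n, hn with
  | 0, hn => exact hn
  | (n+1), hn =>
    rw [Function.iterate_succ_apply, hc] at hn
    rcases Nat.eq_zero_or_pos n with h0 | h0
    · subst h0; exact absurd hn.symm hc'1
    · exfalso
      have hde : T.Desc e c' := ⟨n, hn⟩
      have hde' : T.Desc c' e := ⟨1, by simpa using hc'⟩
      exact hc'1 (aux_desc_antisymm hde' hde)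

/-- The children of `e` as a Finset. -/
noncomputable def childFinset (T : PhyloTree) (e : T.V) : Finset T.V :=
  Finset.univ.filter fun c => T.parent c = e ∧ c ≠ e

theorem aux_mem_childFinset {e c : T.V} :
    c ∈ T.childFinset e ↔ T.parent c = e ∧ c ≠ e := by
  simp [childFinset]

theorem aux_mem_leavesBelow {e : T.V} {l : T.Leaf} :
    l ∈ T.leavesBelow e ↔ T.Desc l.1 e := by
  simp [leavesBelow]

theorem aux_desc_of_child {c e a : T.V} (hc : c ∈ T.childFinset e) (h : T.Desc a c) :
    T.Desc a e := by
  rw [aux_mem_childFinset] at hc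
  exact aux_desc_trans h ⟨1, by simpa using hc.1⟩

theorem aux_leavesBelow_eq_biUnion {e : T.V} (he : ¬ T.IsLeaf e) :
    T.leavesBelow e = (T.childFinset e).biUnion fun c => T.leavesBelow c := by
  ext l
  simp only [aux_mem_leavesBelow, Finset.mem_biUnion]
  constructor
  · intro h
    have hne : l.1 ≠ e := fun h' => he (h' ▸ l.2)
    obtain ⟨c, h1, h2, h3⟩ := aux_desc_child h hne
    exact ⟨c, aux_mem_childFinset.2 ⟨h1, h2⟩, h3⟩
  · rintro ⟨c, hc, h⟩
    exact aux_desc_of_child hc h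

theorem aux_gsum_eq_sum_children {G : Type} [AddCommGroup G] {e : T.V} (he : ¬ T.IsLeaf e)
    (g : T.Leaf → G) : T.gsum g e = ∑ c ∈ T.childFinset e, T.gsum g c := by
  unfold gsum
  rw [aux_leavesBelow_eq_biUnion he, Finset.sum_biUnion]
  intro c hc c' hc' hne
  simp only [Finset.mem_coe, aux_mem_childFinset] at hc hc'
  apply Finset.disjoint_left.2
  intro l hl hl'
  rw [aux_mem_leavesBelow] at hl hl'
  exact hne (aux_child_unique hc.1 hc.2 hc'.1 hc'.2 hl hl')

/-- The descendants of `e` as a Finset. -/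
noncomputable def descFinset (T : PhyloTree) (e : T.V) : Finset T.V :=
  Finset.univ.filter fun a => T.Desc a e

theorem aux_descFinset_ssubset {e c : T.V} (hc : c ∈ T.childFinset e) :
    T.descFinset c ⊂ T.descFinset e := by
  rw [aux_mem_childFinset] at hc
  constructor
  · intro a ha
    simp only [descFinset, Finset.mem_filter, Finset.mem_univ, true_and] at ha ⊢
    exact aux_desc_trans ha ⟨1, by simpa using hc.1⟩
  · intro hsub
    have he : e ∈ T.descFinset e := by
      simp [descFinset, aux_desc_refl]
    have := hsub he
    simp only [descFinset, Finset.mem_filter, Finset.mem_univ, true_and] at this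
    exact hc.2 (aux_desc_antisymm ⟨1, by simpa using hc.1⟩ this)

theorem aux_exists_leaf_below (e : T.V) : ∃ l : T.Leaf, T.Desc l.1 e := by
  by_cases he : T.IsLeaf e
  · exact ⟨⟨e, he⟩, aux_desc_refl e⟩
  · obtain ⟨c, h1, h2⟩ := aux_exists_child he
    have hlt : (T.descFinset c).card < (T.descFinset e).card :=
      Finset.card_lt_card (aux_descFinset_ssubset (aux_mem_childFinset.2 ⟨h1, h2⟩))
    obtain ⟨l, hl⟩ := aux_exists_leaf_below c
    exact ⟨l, aux_desc_trans hl ⟨1, by simpa using h1⟩⟩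
termination_by (T.descFinset e).card
decreasing_by exact hlt

section FriendlyAux

variable {G 𝓛 : Type} [AddCommGroup G] {L : G → 𝓛}

theorem aux_mem_zset_succ {k : ℕ} (f : Fin (k + 1) → G) :
    f ∈ ZSet G (k + 1) ↔ ∑ j : Fin k, f j.castSucc = f (Fin.last k) := by
  have h1 : (Finset.univ.filter fun i : Fin (k+1) => ¬ (i : ℕ) < (k+1) - 1) = {Fin.last k} := by
    ext i
    simp only [Finset.mem_filter, Finset.mem_univ, true_and, Finset.mem_singleton,
      Nat.add_sub_cancel, not_lt]
    constructor
    · intro h; exact Fin.ext (le_antisymm (Nat.lt_succ_iff.1 i.isLt) h)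
    · intro h; subst h; simp [Fin.last]
  have h2 : (∑ i ∈ Finset.univ.filter fun i : Fin (k+1) => (i : ℕ) < (k+1) - 1, f i)
      = ∑ j : Fin k, f j.castSucc := by
    have hsplit := Finset.sum_filter_add_sum_filter_not Finset.univ
      (fun i : Fin (k+1) => (i : ℕ) < (k+1) - 1) f
    rw [h1, Finset.sum_singleton, Fin.sum_univ_castSucc f] at hsplit
    exact add_right_cancel hsplit
  unfold ZSet
  rw [Set.mem_setOf_eq, h1, h2, Finset.sum_singleton]

theorem aux_friendly2 : IsMFriendly L 2 := by
  intro g hg i h hh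
  have hz : ∀ f : Fin 2 → G, f ∈ ZSet G 2 ↔ f 0 = f 1 := by
    intro f
    have := aux_mem_zset_succ (k := 1) f
    simpa [Fin.last] using this
  refine ⟨fun _ => h, (hz _).2 rfl, ?_, rfl⟩
  intro j
  have h01 : g 0 = g 1 := (hz g).1 hg
  have : L (g i) = L (g j) := by
    fin_cases i <;> fin_cases j <;> simp [h01]
  rw [hh, this]

theorem aux_hFr (hL : Friendly L) : ∀ m, 2 ≤ m → IsMFriendly L m := by
  intro m hm
  rcases Nat.lt_or_ge m 3 with h | h
  · have : m = 2 := by omega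
    subst this; exact aux_friendly2
  · exact hL m h

/-- Retarget the last coordinate: given `x : ι → G` and `y` with `L y = L (∑ x)`,
find `z` with the same labels as `x` summing to `y`. -/
theorem aux_claimF (hL : Friendly L) (ι : Type) [Fintype ι] [Nonempty ι] (x : ι → G) (y : G)
    (hy : L y = L (∑ i, x i)) :
    ∃ z : ι → G, (∀ i, L (z i) = L (x i)) ∧ ∑ i, z i = y := by
  set k := Fintype.card ι with hk
  have hk1 : 1 ≤ k := Fintype.card_pos
  let eqv := (Fintype.equivFin ι)
  set x' : Fin k → G := fun j => x (eqv.symm j) with hx'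
  have hsum : ∑ j, x' j = ∑ i, x i := Fintype.sum_equiv eqv.symm _ _ (fun j => rfl)
  set f : Fin (k + 1) → G := Fin.snoc x' (∑ i, x i) with hf
  have hfz : f ∈ ZSet G (k + 1) := by
    rw [aux_mem_zset_succ]
    simp [hf, Fin.snoc_castSucc, Fin.snoc_last, hsum]
  have hfr := aux_hFr hL (k + 1) (by omega) f hfz (Fin.last k) y
    (by rwa [hf, Fin.snoc_last])
  obtain ⟨g', hg'z, hg'lab, hg'last⟩ := hfr
  refine ⟨fun i => g' (Fin.castSucc (eqv i)), ?_, ?_⟩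
  · intro i
    have := hg'lab (Fin.castSucc (eqv i))
    rw [this, hf, Fin.snoc_castSucc, hx']
    simp
  · rw [aux_mem_zset_succ] at hg'z
    rw [← hg'last, ← hg'z]
    exact Fintype.sum_equiv eqv _ _ (fun i => rfl)

/-- Retarget the first coordinate: given `x₀`, a family `x : ι → G` and `y` with
`L y = L x₀`, find `z` and `w` with labels of `x` and of `x₀ + ∑ x` such that
`y + ∑ z = w`. -/
theorem aux_claimF2 (hL : Friendly L) (ι : Type) [Fintype ι] (x : ι → G) (x₀ y : G)
    (hy : L y = L x₀) :
    ∃ (z : ι → G) (w : G), (∀ i, L (z i) = L (x i)) ∧ L w = L (x₀ + ∑ i, x i) ∧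
      y + ∑ i, z i = w := by
  set k := Fintype.card ι with hk
  let eqv := (Fintype.equivFin ι)
  set x' : Fin k → G := fun j => x (eqv.symm j) with hx'
  have hsum : ∑ j, x' j = ∑ i, x i := Fintype.sum_equiv eqv.symm _ _ (fun j => rfl)
  set f : Fin (k + 1 + 1) → G := Fin.snoc (Fin.cons x₀ x') (x₀ + ∑ i, x i) with hf
  have hc0 : f (Fin.castSucc 0) = x₀ := by rw [hf, Fin.snoc_castSucc, Fin.cons_zero]
  have hfz : f ∈ ZSet G (k + 1 + 1) := by
    rw [aux_mem_zset_succ]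
    have : ∀ j : Fin (k + 1), f j.castSucc = (Fin.cons x₀ x' : Fin (k+1) → G) j := fun j => by
      rw [hf, Fin.snoc_castSucc]
    rw [Finset.sum_congr rfl fun j _ => this j, Fin.sum_cons, hsum, hf, Fin.snoc_last]
  have hfr := aux_hFr hL (k + 1 + 1) (by omega) f hfz (Fin.castSucc 0) y (by rw [hc0]; exact hy)
  obtain ⟨g', hg'z, hg'lab, hg'0⟩ := hfr
  refine ⟨fun i => g' (Fin.castSucc (Fin.succ (eqv i))), g' (Fin.last (k+1)), ?_, ?_, ?_⟩
  · intro i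
    rw [hg'lab (Fin.castSucc (Fin.succ (eqv i))), hf, Fin.snoc_castSucc, Fin.cons_succ, hx']
    simp
  · rw [hg'lab (Fin.last (k+1)), hf, Fin.snoc_last]
  · rw [aux_mem_zset_succ] at hg'z
    rw [← hg'z]
    have hsucc := Fin.sum_univ_succ (fun j : Fin (k+1) => g' j.castSucc)
    rw [hsucc, show g' ((0 : Fin (k+1)).castSucc) = y from hg'0]
    congr 1
    exact Fintype.sum_equiv eqv (fun i => g' (Fin.castSucc (Fin.succ (eqv i))))
      (fun j => g' (Fin.castSucc (Fin.succ j))) (fun i => rfl)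

end FriendlyAux

section Retarget

variable {T : PhyloTree} {G 𝓛 : Type} [AddCommGroup G] {L : G → 𝓛}

theorem aux_leavesBelow_leaf {e : T.V} (he : T.IsLeaf e) :
    T.leavesBelow e = {(⟨e, he⟩ : T.Leaf)} := by
  ext l
  erw [aux_mem_leavesBelow, Finset.mem_singleton]
  constructor
  · intro h; exact Subtype.ext (aux_desc_leaf he h)
  · intro h; subst h; exact aux_desc_refl e

theorem aux_gsum_congr {e : T.V} {g g' : T.Leaf → G}
    (h : ∀ l : T.Leaf, T.Desc l.1 e → g l = g' l) : T.gsum g e = T.gsum g' e :=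
  Finset.sum_congr rfl fun l hl => h l (aux_mem_leavesBelow.1 hl)

theorem aux_retargetMinus (hL : Friendly L) (e : T.V) (g₀ : T.Leaf → G) (x : G)
    (hx : L x = L (T.gsum g₀ e)) :
    ∃ g₁ : T.Leaf → G, T.gsum g₁ e = x ∧
      ∀ e', T.Desc e' e → L (T.gsum g₁ e') = L (T.gsum g₀ e') := by
  by_cases he : T.IsLeaf e
  · refine ⟨Function.update g₀ ⟨e, he⟩ x, ?_, ?_⟩
    · unfold gsum
      erw [aux_leavesBelow_leaf he, Finset.sum_singleton, Function.update_self]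
    · intro e' he'
      have : e' = e := aux_desc_leaf he he'
      subst this
      have : T.gsum (Function.update g₀ ⟨e', he⟩ x) e' = x := by
        unfold gsum
        erw [aux_leavesBelow_leaf he, Finset.sum_singleton, Function.update_self]
      rw [this, hx]
  · have hne : Nonempty ↥(T.childFinset e) := by
      obtain ⟨c, h1, h2⟩ := aux_exists_child he
      exact ⟨⟨c, aux_mem_childFinset.2 ⟨h1, h2⟩⟩⟩
    have hdecomp : ∀ g : T.Leaf → G, T.gsum g e = ∑ c : ↥(T.childFinset e), T.gsum g c.1 := by
      intro g
      rw [aux_gsum_eq_sum_children he, ← Finset.sum_coe_sort]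
    obtain ⟨z, hzlab, hzsum⟩ := aux_claimF hL ↥(T.childFinset e)
      (fun c => T.gsum g₀ c.1) x (by rw [← hdecomp]; exact hx)
    have hrec : ∀ c : ↥(T.childFinset e), ∃ g' : T.Leaf → G, T.gsum g' c.1 = z c ∧
        ∀ e', T.Desc e' c.1 → L (T.gsum g' e') = L (T.gsum g₀ e') :=
      fun c => aux_retargetMinus hL c.1 g₀ (z c) (hzlab c)
    choose gA hA1 hA2 using hrec
    set g₁ : T.Leaf → G :=
      fun l => if h : ∃ c : ↥(T.childFinset e), T.Desc l.1 c.1 then gA h.choose l else g₀ l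
      with hg₁
    have key : ∀ (c : ↥(T.childFinset e)) (l : T.Leaf), T.Desc l.1 c.1 → g₁ l = gA c l := by
      intro c l hl
      have hex : ∃ c' : ↥(T.childFinset e), T.Desc l.1 c'.1 := ⟨c, hl⟩
      rw [hg₁]
      simp only [dif_pos hex]
      congr 1
      have hc := aux_mem_childFinset.1 c.2
      have hc' := aux_mem_childFinset.1 hex.choose.2
      exact Subtype.ext (aux_child_unique hc'.1 hc'.2 hc.1 hc.2 hex.choose_spec hl)
    have hgsum_c : ∀ (c : ↥(T.childFinset e)) (e' : T.V), T.Desc e' c.1 →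
        T.gsum g₁ e' = T.gsum (gA c) e' := by
      intro c e' he'
      exact aux_gsum_congr fun l hl => key c l (aux_desc_trans hl he')
    have hval : T.gsum g₁ e = x := by
      rw [hdecomp, ← hzsum]
      exact Finset.sum_congr rfl fun c _ => by
        rw [hgsum_c c c.1 (aux_desc_refl c.1), hA1 c]
    refine ⟨g₁, hval, ?_⟩
    intro e' he'
    by_cases hee : e' = e
    · subst hee; rw [hval, hx]
    · obtain ⟨c, h1, h2, h3⟩ := aux_desc_child he' hee
      have hcmem : c ∈ T.childFinset e := aux_mem_childFinset.2 ⟨h1, h2⟩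
      rw [hgsum_c ⟨c, hcmem⟩ e' h3]
      exact hA2 ⟨c, hcmem⟩ e' h3
termination_by (T.descFinset e).card
decreasing_by exact Finset.card_lt_card (aux_descFinset_ssubset c.2)

end Retarget

section RetargetPlus

variable {T : PhyloTree} {G 𝓛 : Type} [AddCommGroup G] {L : G → 𝓛}

theorem aux_leavesBelow_subset {v e : T.V} (h : T.Desc v e) :
    T.leavesBelow v ⊆ T.leavesBelow e := fun l hl =>
  aux_mem_leavesBelow.2 (aux_desc_trans (aux_mem_leavesBelow.1 hl) h)

/-- Split `gsum` at `e` along the subtree below `v`. -/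
theorem aux_gsum_sdiff {v e : T.V} (h : T.Desc v e) (g : T.Leaf → G) :
    T.gsum g e = T.gsum g v + ∑ l ∈ T.leavesBelow e \ T.leavesBelow v, g l := by
  unfold gsum
  rw [add_comm, Finset.sum_sdiff (aux_leavesBelow_subset h)]

/-- Adjust `g₀` on the leaves below `e` so that `gsum` at `e` becomes `x`. -/
theorem aux_adjust (e : T.V) (g₀ : T.Leaf → G) (x : G) :
    ∃ g₁ : T.Leaf → G, T.gsum g₁ e = x ∧ ∀ l : T.Leaf, ¬ T.Desc l.1 e → g₁ l = g₀ l := by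
  obtain ⟨l₀, hl₀⟩ := aux_exists_leaf_below e
  refine ⟨Function.update g₀ l₀ (g₀ l₀ + (x - T.gsum g₀ e)), ?_, ?_⟩
  · have hmem : l₀ ∈ T.leavesBelow e := aux_mem_leavesBelow.2 hl₀
    unfold gsum
    rw [Finset.sum_update_of_mem hmem]
    have := Finset.sum_sdiff (Finset.singleton_subset_iff.2 hmem) (f := g₀)
    rw [Finset.sum_singleton] at this
    have hrest : ∑ l ∈ T.leavesBelow e \ {l₀}, g₀ l = T.gsum g₀ e - g₀ l₀ := by
      unfold gsum; rw [← this]; abel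
    rw [hrest]
    unfold gsum
    abel
  · intro l hl
    apply Function.update_of_ne
    intro hll; subst hll; exact hl hl₀

theorem aux_desc_parent_of {v e' : T.V} (h : T.Desc v e') (hne : e' ≠ v) :
    T.Desc (T.parent v) e' := by
  obtain ⟨n, hn⟩ := h
  match n, hn with
  | 0, hn => exact absurd hn.symm hne
  | (k+1), hn => exact ⟨k, by rwa [Function.iterate_succ_apply] at hn⟩

theorem aux_retargetPlus (hL : Friendly L) (v : T.V) (g₀ : T.Leaf → G) (x : G)
    (hx : L x = L (T.gsum g₀ v)) :
    ∃ g₁ : T.Leaf → G, T.gsum g₁ v = x ∧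
      ∀ e', ¬ T.Desc e' v → L (T.gsum g₁ e') = L (T.gsum g₀ e') := by
  by_cases hroot : T.parent v = v
  · have hv : v = T.root := aux_periodic_eq_root (le_refl 1) (by simpa using hroot)
    obtain ⟨g₁, h1, _⟩ := aux_adjust v g₀ x
    refine ⟨g₁, h1, fun e' he' => absurd (hv ▸ T.reaches_root e') he'⟩
  · set p := T.parent v with hpdef
    have hvp : T.Desc v p := ⟨1, rfl⟩
    have hvnep : v ≠ p := fun h => hroot h.symm
    have hvmem : v ∈ T.childFinset p := aux_mem_childFinset.2 ⟨rfl, hvnep⟩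
    have hpv : ¬ T.Desc p v := fun h => hvnep (aux_desc_antisymm hvp h)
    have hpleaf : ¬ T.IsLeaf p := fun h => hvnep (h v rfl)
    set S := (T.childFinset p).erase v with hSdef
    have hSchild : ∀ s : ↥S, T.parent s.1 = p ∧ s.1 ≠ p :=
      fun s => aux_mem_childFinset.1 (Finset.mem_of_mem_erase s.2)
    have hSnev : ∀ s : ↥S, s.1 ≠ v := fun s => Finset.ne_of_mem_erase s.2
    have hpsum : ∀ g : T.Leaf → G, T.gsum g p = T.gsum g v + ∑ s : ↥S, T.gsum g s.1 := by
      intro g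
      rw [aux_gsum_eq_sum_children hpleaf, ← Finset.add_sum_erase _ _ hvmem,
        ← Finset.sum_coe_sort]
    obtain ⟨z, w, hzlab, hwlab, hzw⟩ :=
      aux_claimF2 hL ↥S (fun s => T.gsum g₀ s.1) (T.gsum g₀ v) x hx
    have hwlab' : L w = L (T.gsum g₀ p) := by rw [hwlab, ← hpsum]
    have hsib : ∀ s : ↥S, ∃ g' : T.Leaf → G, T.gsum g' s.1 = z s ∧
        ∀ e', T.Desc e' s.1 → L (T.gsum g' e') = L (T.gsum g₀ e') :=
      fun s => aux_retargetMinus hL s.1 g₀ (z s) (hzlab s)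
    choose gS hS1 hS2 using hsib
    obtain ⟨gP, hP1, hP2⟩ := aux_retargetPlus hL p g₀ w hwlab'
    obtain ⟨inn, hinn1, _⟩ := aux_adjust v g₀ x
    set g₁ : T.Leaf → G := fun l =>
      if T.Desc l.1 v then inn l
      else if h : ∃ s : ↥S, T.Desc l.1 s.1 then gS h.choose l else gP l with hg₁def
    -- pointwise facts
    have keyv : ∀ l : T.Leaf, T.Desc l.1 v → g₁ l = inn l := by
      intro l hl; rw [hg₁def]; simp only [if_pos hl]
    have hnotv_of_S : ∀ (s : ↥S) (l : T.Leaf), T.Desc l.1 s.1 → ¬ T.Desc l.1 v := by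
      intro s l hl hlv
      exact hSnev s (aux_child_unique (hSchild s).1 (hSchild s).2 rfl hvnep hl hlv)
    have keyS : ∀ (s : ↥S) (l : T.Leaf), T.Desc l.1 s.1 → g₁ l = gS s l := by
      intro s l hl
      have hex : ∃ s' : ↥S, T.Desc l.1 s'.1 := ⟨s, hl⟩
      rw [hg₁def]
      simp only [if_neg (hnotv_of_S s l hl), dif_pos hex]
      congr 1
      exact Subtype.ext (aux_child_unique (hSchild hex.choose).1 (hSchild hex.choose).2
        (hSchild s).1 (hSchild s).2 hex.choose_spec hl)
    have keyP : ∀ l : T.Leaf, ¬ T.Desc l.1 p → g₁ l = gP l := by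
      intro l hl
      have h1 : ¬ T.Desc l.1 v := fun h => hl (aux_desc_trans h hvp)
      have h2 : ¬ ∃ s : ↥S, T.Desc l.1 s.1 := by
        rintro ⟨s, hs⟩
        exact hl (aux_desc_of_child (Finset.mem_of_mem_erase s.2) hs)
      rw [hg₁def]; simp only [if_neg h1, dif_neg h2]
    -- gsum facts
    have hgv : T.gsum g₁ v = x := by
      rw [aux_gsum_congr fun l hl => keyv l hl]; exact hinn1
    have hgS : ∀ (s : ↥S) (e' : T.V), T.Desc e' s.1 → T.gsum g₁ e' = T.gsum (gS s) e' :=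
      fun s e' he' => aux_gsum_congr fun l hl => keyS s l (aux_desc_trans hl he')
    have hgp : T.gsum g₁ p = w := by
      rw [hpsum, hgv, ← hzw]
      congr 1
      exact Finset.sum_congr rfl fun s _ => by
        rw [hgS s s.1 (aux_desc_refl s.1), hS1 s]
    refine ⟨g₁, hgv, ?_⟩
    intro e' he'
    by_cases hve' : T.Desc v e'
    · -- e' is a strict ancestor of v
      have hnev : e' ≠ v := fun h => he' (h ▸ aux_desc_refl v)
      have hpe' : T.Desc p e' := aux_desc_parent_of hve' hnev
      by_cases hep : e' = p
      · subst hep; rw [hgp, hwlab']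
      · have hnotdesc : ¬ T.Desc e' p := fun h => hep (aux_desc_antisymm h hpe')
        have hsplit1 := aux_gsum_sdiff hpe' g₁
        have hsplit2 := aux_gsum_sdiff hpe' gP
        have hdiff : ∑ l ∈ T.leavesBelow e' \ T.leavesBelow p, g₁ l
            = ∑ l ∈ T.leavesBelow e' \ T.leavesBelow p, gP l := by
          apply Finset.sum_congr rfl
          intro l hl
          rw [Finset.mem_sdiff, aux_mem_leavesBelow, aux_mem_leavesBelow] at hl
          exact keyP l hl.2
        have : T.gsum g₁ e' = T.gsum gP e' := by rw [hsplit1, hsplit2, hgp, hP1, hdiff]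
        rw [this]
        exact hP2 e' hnotdesc
    · -- v is not below e' and e' not below v
      by_cases hep' : T.Desc e' p
      · have hnep : e' ≠ p := fun h => hve' (h ▸ hvp)
        obtain ⟨c, hc1, hc2, hc3⟩ := aux_desc_child hep' hnep
        have hcv : c ≠ v := fun h => he' (h ▸ hc3)
        have hcS : c ∈ S := Finset.mem_erase.2 ⟨hcv, aux_mem_childFinset.2 ⟨hc1, hc2⟩⟩
        rw [hgS ⟨c, hcS⟩ e' hc3]
        exact hS2 ⟨c, hcS⟩ e' hc3
      · have hnone : ∀ l : T.Leaf, T.Desc l.1 e' → ¬ T.Desc l.1 p := by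
          intro l hl hlp
          rcases aux_comparable hl hlp with h | h
          · exact hep' h
          · exact hve' (aux_desc_trans hvp h)
        have : T.gsum g₁ e' = T.gsum gP e' :=
          aux_gsum_congr fun l hl => keyP l (hnone l hl)
        rw [this]
        exact hP2 e' hep'
termination_by (Finset.univ.filter fun a => ¬ T.Desc a v).card
decreasing_by
  apply Finset.card_lt_card
  constructor
  · intro a ha
    simp only [Finset.mem_filter, Finset.mem_univ, true_and] at ha ⊢
    exact fun h => ha (aux_desc_trans h hvp)
  · intro hsub
    have hpmem : p ∈ Finset.univ.filter fun a => ¬ T.Desc a v := by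
      simp only [Finset.mem_filter, Finset.mem_univ, true_and]; exact hpv
    have := hsub hpmem
    simp only [Finset.mem_filter, Finset.mem_univ, true_and] at this
    exact this (aux_desc_refl p)

end RetargetPlus

section Realize

variable {T : PhyloTree} {G 𝓛 : Type} [AddCommGroup G] {L : G → 𝓛}

theorem aux_mem_sideSet_v {v e' : T.V} {u : ↥(T.incident v)} (hu : u.1 = v) :
    e' ∈ T.sideSet v u ↔ (e' = v ∨ ¬ T.Desc e' v) := by
  unfold sideSet
  rw [if_pos hu]
  exact Iff.rfl

theorem aux_mem_sideSet_child {v e' : T.V} {u : ↥(T.incident v)} (hu : u.1 ≠ v) :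
    e' ∈ T.sideSet v u ↔ T.Desc e' u.1 := by
  unfold sideSet
  rw [if_neg hu]
  exact Iff.rfl

theorem aux_sideSet_cover (T : PhyloTree) (v : T.V) (e : T.V) :
    ∃ (u : ↥(T.incident v)) (h : e ∈ T.sideSet v u), True := by
  by_cases hd : T.Desc e v
  · by_cases hev : e = v
    · exact ⟨⟨v, Or.inl rfl⟩, (aux_mem_sideSet_v rfl).2 (Or.inl hev), trivial⟩
    · obtain ⟨c, h1, h2, h3⟩ := aux_desc_child hd hev
      exact ⟨⟨c, Or.inr ⟨h1, h2⟩⟩, (aux_mem_sideSet_child h2).2 h3, trivial⟩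
  · exact ⟨⟨v, Or.inl rfl⟩, (aux_mem_sideSet_v rfl).2 (Or.inr hd), trivial⟩

theorem aux_sum_children_subtype (v : T.V) (f : T.V → G) :
    ∑ c : ↥(T.children v), f c.1 = ∑ c ∈ T.childFinset v, f c := by
  rw [← Finset.sum_coe_sort (T.childFinset v) f]
  apply Fintype.sum_equiv (Equiv.subtypeEquivRight ?_)
  · intro c; rfl
  · intro x
    simp only [aux_mem_childFinset]
    exact Iff.rfl

/-- The core realization lemma: an assembled labeling is consistent on the whole tree. -/
theorem aux_realize (hL : Friendly L) (v : T.V) (hv : ¬ T.IsLeaf v)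
    (rr : ↥(T.consLabClaw L v))
    (Ff : ∀ u : ↥(T.incident v), ↥(T.sideSet v u) → 𝓛)
    (hFf : ∀ u, Ff u ∈ T.consLab L (T.sideSet v u))
    (hFfe : ∀ u, Ff u ⟨u.1, T.mem_sideSet v u⟩ = rr.1 u)
    (lam : T.V → 𝓛)
    (hlam : ∀ u e' (h : e' ∈ T.sideSet v u), lam e' = Ff u ⟨e', h⟩) :
    lam ∈ T.consLabFull L := by
  classical
  obtain ⟨hfun, hh⟩ := rr.2
  set uv : ↥(T.incident v) := ⟨v, Or.inl rfl⟩ with huv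
  -- realization of the Eplus side
  obtain ⟨gp, hgp⟩ := hFf uv
  -- child data
  have hchild : ∀ c : ↥(T.children v), T.parent c.1 = v ∧ c.1 ≠ v := fun c => c.2
  set uc : ↥(T.children v) → ↥(T.incident v) :=
    fun c => ⟨c.1, Or.inr ⟨(hchild c).1, (hchild c).2⟩⟩ with hucdef
  have hucne : ∀ c, (uc c).1 ≠ v := fun c => (hchild c).2
  -- realizations of the child subtrees
  have hFm : ∀ c : ↥(T.children v), ∃ gm : T.Leaf → G,
      (fun e' : ↥(T.sideSet v (uc c)) => L (T.gsum gm e'.1)) = Ff (uc c) :=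
    fun c => hFf (uc c)
  choose gm hgm using hFm
  -- claw values
  have hclaw_c : ∀ c : ↥(T.children v), rr.1 (uc c) = L (hfun c) := by
    intro c
    have := congrFun hh (uc c)
    dsimp only at this
    rw [dif_neg (hucne c)] at this
    rw [← this]
  have hclaw_v : rr.1 uv = L (∑ c : ↥(T.children v), hfun c) := by
    have := congrFun hh uv
    dsimp only at this
    rw [dif_pos rfl] at this
    exact this.symm
  -- label identities
  have hlab_c : ∀ c : ↥(T.children v),
      L (T.gsum (gm c) c.1) = L (hfun c) := by
    intro c
    have h1 : Ff (uc c) ⟨(uc c).1, T.mem_sideSet v (uc c)⟩ = L (T.gsum (gm c) c.1) := by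
      rw [← hgm c]
    rw [← h1, hFfe (uc c), hclaw_c c]
  have hlab_v : L (T.gsum gp v) = L (∑ c : ↥(T.children v), hfun c) := by
    have h1 : Ff uv ⟨uv.1, T.mem_sideSet v uv⟩ = L (T.gsum gp v) := by
      rw [← hgp]
    rw [← h1, hFfe uv, hclaw_v]
  set w : G := ∑ c : ↥(T.children v), hfun c with hwdef
  -- retarget the children and the outside
  have hA : ∀ c : ↥(T.children v), ∃ gA : T.Leaf → G, T.gsum gA c.1 = hfun c ∧
      ∀ e', T.Desc e' c.1 → L (T.gsum gA e') = L (T.gsum (gm c) e') :=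
    fun c => aux_retargetMinus hL c.1 (gm c) (hfun c) (hlab_c c).symm
  choose gA hA1 hA2 using hA
  obtain ⟨gB, hB1, hB2⟩ := aux_retargetPlus hL v gp w hlab_v.symm
  -- assemble
  set g : T.Leaf → G := fun l =>
    if h : ∃ c : ↥(T.children v), T.Desc l.1 c.1 then gA h.choose l else gB l with hgdef
  have k1 : ∀ (c : ↥(T.children v)) (l : T.Leaf), T.Desc l.1 c.1 → g l = gA c l := by
    intro c l hl
    have hex : ∃ c' : ↥(T.children v), T.Desc l.1 c'.1 := ⟨c, hl⟩
    rw [hgdef]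
    simp only [dif_pos hex]
    congr 1
    exact Subtype.ext (aux_child_unique (hchild hex.choose).1 (hchild hex.choose).2
      (hchild c).1 (hchild c).2 hex.choose_spec hl)
  have k2 : ∀ l : T.Leaf, ¬ T.Desc l.1 v → g l = gB l := by
    intro l hl
    have : ¬ ∃ c : ↥(T.children v), T.Desc l.1 c.1 := by
      rintro ⟨c, hc⟩
      exact hl (aux_desc_trans hc ⟨1, by simpa using (hchild c).1⟩)
    rw [hgdef]; simp only [dif_neg this]
  have k3 : ∀ (c : ↥(T.children v)) (e' : T.V), T.Desc e' c.1 →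
      T.gsum g e' = T.gsum (gA c) e' :=
    fun c e' he' => aux_gsum_congr fun l hl => k1 c l (aux_desc_trans hl he')
  have k4 : T.gsum g v = w := by
    rw [aux_gsum_eq_sum_children hv, hwdef, ← aux_sum_children_subtype v (T.gsum g)]
    apply Fintype.sum_congr
    intro c
    rw [k3 c c.1 (aux_desc_refl c.1), hA1 c]
  -- main pointwise claim
  have k5 : ∀ e' : T.V, L (T.gsum g e') = lam e' := by
    intro e'
    by_cases hd : T.Desc e' v
    · by_cases hev : e' = v
      · have hmem : e' ∈ T.sideSet v uv := (aux_mem_sideSet_v rfl).2 (Or.inl hev)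
        rw [hlam uv e' hmem, ← congrFun hgp ⟨e', hmem⟩]
        show L (T.gsum g e') = L (T.gsum gp e')
        rw [hev, k4]
        exact hlab_v.symm
      · obtain ⟨c, h1, h2, h3⟩ := aux_desc_child hd hev
        set c' : ↥(T.children v) := ⟨c, h1, h2⟩ with hc'
        have hmem : e' ∈ T.sideSet v (uc c') := (aux_mem_sideSet_child (hucne c')).2 h3
        rw [hlam (uc c') e' hmem, ← congrFun (hgm c') ⟨e', hmem⟩]
        show L (T.gsum g e') = L (T.gsum (gm c') e')
        rw [k3 c' e' h3]
        exact hA2 c' e' h3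
    · have hmem : e' ∈ T.sideSet v uv := (aux_mem_sideSet_v rfl).2 (Or.inr hd)
      rw [hlam uv e' hmem, ← congrFun hgp ⟨e', hmem⟩]
      show L (T.gsum g e') = L (T.gsum gp e')
      by_cases hve : T.Desc v e'
      · have hsplit1 := aux_gsum_sdiff hve g
        have hsplit2 := aux_gsum_sdiff hve gB
        have hdiff : ∑ l ∈ T.leavesBelow e' \ T.leavesBelow v, g l
            = ∑ l ∈ T.leavesBelow e' \ T.leavesBelow v, gB l := by
          apply Finset.sum_congr rfl
          intro l hl
          rw [Finset.mem_sdiff, aux_mem_leavesBelow, aux_mem_leavesBelow] at hl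
          exact k2 l hl.2
        have : T.gsum g e' = T.gsum gB e' := by rw [hsplit1, hsplit2, k4, hB1, hdiff]
        rw [this]
        exact hB2 e' hd
      · have hnone : ∀ l : T.Leaf, T.Desc l.1 e' → ¬ T.Desc l.1 v := by
          intro l hl hlv
          rcases aux_comparable hl hlv with h | h
          · exact hd h
          · exact hve h
        have : T.gsum g e' = T.gsum gB e' := aux_gsum_congr fun l hl => k2 l (hnone l hl)
        rw [this]
        exact hB2 e' hd
  exact ⟨g, funext fun e' => k5 e'⟩

end Realize

end PhyloTree
/-- **Lemma (local-to-global extension at a vertex).** For a friendly labeling `L` and an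
interior vertex `v`, a binomial `g` of the claw-tree ideal `I_{T_v,L}` together with
compatible consistent labelings `L_i^j`, `M_i^j` of the subtrees `T_{v,e_j}` whose multisets
agree columnwise yields consistent assembled labelings `λ_i`, `μ_i` of `T`, and the binomial
`g* = ∏ q_{λ_i} − ∏ q_{μ_i}` lies in `I_{T,L}`. -/
theorem assembled_binomial_mem_toricIdeal (T : PhyloTree) {G 𝓛 : Type}
    [AddCommGroup G] [Fintype G]
    (L : G → 𝓛) (hL : Friendly L) (v : T.V) (hv : ¬ T.IsLeaf v)
    (d : ℕ) (r r' : Fin d → ↥(T.consLabClaw L v))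
    (hbin : ((∏ i, X (r i)) - ∏ i, X (r' i)) ∈ T.clawIdeal L v)
    (Lf Mf : ∀ _ : Fin d, ∀ u : ↥(T.incident v), ↥(T.sideSet v u) → 𝓛)
    (hLf : ∀ i u, Lf i u ∈ T.consLab L (T.sideSet v u))
    (hLfe : ∀ i u, Lf i u ⟨u.1, T.mem_sideSet v u⟩ = (r i).1 u)
    (hMf : ∀ i u, Mf i u ∈ T.consLab L (T.sideSet v u))
    (hMfe : ∀ i u, Mf i u ⟨u.1, T.mem_sideSet v u⟩ = (r' i).1 u)
    (hmult : ∀ u, Multiset.map (fun i => Lf i u) Finset.univ.val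
                = Multiset.map (fun i => Mf i u) Finset.univ.val)
    (lam mu : Fin d → T.V → 𝓛)
    (hlam : ∀ i u e' (h : e' ∈ T.sideSet v u), lam i e' = Lf i u ⟨e', h⟩)
    (hmu : ∀ i u e' (h : e' ∈ T.sideSet v u), mu i e' = Mf i u ⟨e', h⟩) :
    ∃ (hl : ∀ i, lam i ∈ T.consLabFull L) (hm : ∀ i, mu i ∈ T.consLabFull L),
      ((∏ i, X (⟨lam i, hl i⟩ : ↥(T.consLabFull L))) -
        ∏ i, X (⟨mu i, hm i⟩ : ↥(T.consLabFull L)))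
        ∈ T.toricIdealFull L := by
  classical
  have hl : ∀ i, lam i ∈ T.consLabFull L := fun i =>
    PhyloTree.aux_realize hL v hv (r i) (Lf i) (hLf i) (hLfe i) (lam i)
      (fun u e' h => hlam i u e' h)
  have hm : ∀ i, mu i ∈ T.consLabFull L := fun i =>
    PhyloTree.aux_realize hL v hv (r' i) (Mf i) (hMf i) (hMfe i) (mu i)
      (fun u e' h => hmu i u e' h)
  refine ⟨hl, hm, ?_⟩
  rw [PhyloTree.toricIdealFull, RingHom.mem_ker, map_sub, map_prod, map_prod]
  simp only [aeval_X]
  rw [sub_eq_zero]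
  have key : ∀ e : T.V, (∏ i, (X (e, lam i e) : MvPolynomial (T.V × 𝓛) ℂ))
      = ∏ i, X (e, mu i e) := by
    intro e
    obtain ⟨u, hu, -⟩ := PhyloTree.aux_sideSet_cover T v e
    calc (∏ i, (X (e, lam i e) : MvPolynomial (T.V × 𝓛) ℂ))
        = ∏ i, X (e, Lf i u ⟨e, hu⟩) :=
          Finset.prod_congr rfl fun i _ => by rw [hlam i u e hu]
      _ = (Multiset.map ((fun f' : ↥(T.sideSet v u) → 𝓛 =>
            (X (e, f' ⟨e, hu⟩) : MvPolynomial (T.V × 𝓛) ℂ)) ∘ (fun i => Lf i u))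
            Finset.univ.val).prod := by
          rw [Finset.prod_eq_multiset_prod]; rfl
      _ = (Multiset.map ((fun f' : ↥(T.sideSet v u) → 𝓛 =>
            (X (e, f' ⟨e, hu⟩) : MvPolynomial (T.V × 𝓛) ℂ)) ∘ (fun i => Mf i u))
            Finset.univ.val).prod := by
          rw [← Multiset.map_map, ← Multiset.map_map, hmult u]
      _ = ∏ i, X (e, Mf i u ⟨e, hu⟩) := by
          rw [← Finset.prod_eq_multiset_prod]; rfl
      _ = ∏ i, X (e, mu i e) := Finset.prod_congr rfl fun i _ => by rw [hmu i u e hu]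
  calc (∏ i, ∏ e : T.V, (X (e, lam i e) : MvPolynomial (T.V × 𝓛) ℂ))
      = ∏ e : T.V, ∏ i, X (e, lam i e) := Finset.prod_comm
    _ = ∏ e : T.V, ∏ i, X (e, mu i e) := Finset.prod_congr rfl fun e _ => key e
    _ = ∏ i, ∏ e : T.V, X (e, mu i e) := Finset.prod_comm
end

section
/- For every integer n ≥ 2, the toric ideal I_{ℤ/2ℤ, n}, defined as the kernel of the ℂ-algebra homomorphism ℂ[q_g : g ∈ (ℤ/2ℤ)^n] → ℂ[a^{(i)}_h : 1 ≤ i ≤ n+1, h ∈ ℤ/2ℤ] sending q_{(g_1,…,g_n)} ↦ a^{(1)}_{g_1} a^{(2)}_{g_2} ⋯ a^{(n)}_{g_n} a^{(n+1)}_{g_1+g_2+⋯+g_n}, is generated by the homogeneous polynomials of degree 2 that it contains. -/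
open MvPolynomial

/-- The monomial map for the claw tree `K_{1,n}` over a group `G`:
`q_{(g_1,…,g_n)} ↦ a^{(1)}_{g_1} ⋯ a^{(n)}_{g_n} a^{(n+1)}_{g_1+⋯+g_n}`. -/
noncomputable def clawMap (G : Type) [AddCommGroup G] [Fintype G] (n : ℕ) :
    MvPolynomial (Fin n → G) ℂ →ₐ[ℂ] MvPolynomial (Fin (n + 1) × G) ℂ :=
  aeval fun g => (∏ i : Fin n, X (i.castSucc, g i)) * X (Fin.last n, ∑ i, g i)

/-- The toric ideal `I_{G,n}` of the claw tree `K_{1,n}`. -/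
noncomputable def clawIdeal (G : Type) [AddCommGroup G] [Fintype G] (n : ℕ) :
    Ideal (MvPolynomial (Fin n → G) ℂ) :=
  RingHom.ker (clawMap G n)


open Finset

variable {n : ℕ}

abbrev V (n : ℕ) := Fin n → ZMod 2

/-- extended vector: append the coordinate sum -/
def extv (g : V n) : Fin (n + 1) → ZMod 2 := Fin.snoc g (∑ i, g i)

lemma extv_castSucc (g : V n) (i : Fin n) : extv g i.castSucc = g i := by
  simp [extv]

lemma extv_last (g : V n) : extv g (Fin.last n) = ∑ i, g i := by
  simp [extv]

lemma extv_injective : Function.Injective (extv (n := n)) := by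
  intro g h hgh
  funext i
  have := congrFun hgh i.castSucc
  simpa [extv_castSucc] using this

lemma sum_extv (g : V n) : ∑ i, extv g i = 0 := by
  rw [Fin.sum_univ_castSucc]
  simp only [extv_castSucc, extv_last]
  exact CharTwo.add_self_eq_zero _

/-- difference set of two vectors (in extended coordinates) -/
def dset (g h : V n) : Finset (Fin (n + 1)) :=
  univ.filter (fun i => extv g i ≠ extv h i)

lemma mem_dset {g h : V n} {i : Fin (n+1)} : i ∈ dset g h ↔ extv g i ≠ extv h i := by
  simp [dset]

lemma dset_comm (g h : V n) : dset g h = dset h g := by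
  ext i; simp [mem_dset, ne_comm]

lemma zmod2_add_one_of_ne {a b : ZMod 2} (h : a ≠ b) : a + 1 = b := by
  revert h; revert a b; decide

lemma zmod2_ne_iff {a b c : ZMod 2} (h : a ≠ b) : (c ≠ a ↔ c = b) := by
  revert h; revert a b c; decide

lemma even_card_dset (g h : V n) : Even (dset g h).card := by
  have h1 : ∑ i, (extv g i + extv h i) = 0 := by
    rw [Finset.sum_add_distrib, sum_extv, sum_extv, add_zero]
  have h2 : ∑ i, (extv g i + extv h i) = ((dset g h).card : ZMod 2) := by
    rw [← Finset.sum_filter_add_sum_filter_not univ (fun i => extv g i ≠ extv h i)]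
    have e1 : ∀ i ∈ univ.filter (fun i => extv g i ≠ extv h i), extv g i + extv h i = 1 := by
      intro i hi
      simp only [mem_filter] at hi
      have := hi.2; revert this; generalize extv g i = a; generalize extv h i = b
      revert a b; decide
    have e2 : ∀ i ∈ univ.filter (fun i => ¬ extv g i ≠ extv h i), extv g i + extv h i = 0 := by
      intro i hi
      simp only [mem_filter, not_not] at hi
      rw [hi.2]; exact CharTwo.add_self_eq_zero _
    rw [Finset.sum_congr rfl e1, Finset.sum_congr rfl e2, Finset.sum_const, Finset.sum_const]
    simp [dset]
  have : ((dset g h).card : ZMod 2) = 0 := by rw [← h2, h1]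
  have hdvd : (2 : ℕ) ∣ (dset g h).card := by
    rwa [ZMod.natCast_eq_zero_iff] at this
  exact even_iff_two_dvd.mpr hdvd

/-- flp the coordinates of `g` indexed by `s` (in extended coordinates, `s ⊆ Fin (n+1)`) -/
def flp (g : V n) (s : Finset (Fin (n + 1))) : V n :=
  fun i => g i + (if i.castSucc ∈ s then 1 else 0)

lemma extv_flp {s : Finset (Fin (n+1))} (hs : Even s.card) (g : V n) (i : Fin (n+1)) :
    extv (flp g s) i = extv g i + (if i ∈ s then 1 else 0) := by
  induction i using Fin.lastCases with
  | last =>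
    rw [extv_last, extv_last]
    have hsum : ∑ i : Fin (n+1), (if i ∈ s then (1 : ZMod 2) else 0) = 0 := by
      rw [Finset.sum_ite_mem, Finset.univ_inter, Finset.sum_const, nsmul_eq_mul, mul_one]
      obtain ⟨k, hk⟩ := hs
      rw [hk]; push_cast
      exact CharTwo.add_self_eq_zero _
    have : ∑ i : Fin n, (if (i.castSucc : Fin (n+1)) ∈ s then (1 : ZMod 2) else 0)
        = (if Fin.last n ∈ s then 1 else 0) := by
      have := hsum
      rw [Fin.sum_univ_castSucc] at this
      have h2 := congrArg (· + (if Fin.last n ∈ s then (1:ZMod 2) else 0)) this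
      simp only [zero_add] at h2
      rw [add_assoc] at h2
      rw [show ((if Fin.last n ∈ s then (1:ZMod 2) else 0) + (if Fin.last n ∈ s then (1:ZMod 2) else 0)) = 0 from CharTwo.add_self_eq_zero _, add_zero] at h2
      exact h2
    unfold flp
    rw [Finset.sum_add_distrib, this]
  | cast i =>
    rw [extv_castSucc]
    unfold flp
    rw [extv_castSucc]

lemma dset_flp {s : Finset (Fin (n+1))} (hs : Even s.card) (g h : V n) :
    dset (flp g s) h = ((dset g h) \ s) ∪ (s \ (dset g h)) := by
  ext i
  simp only [mem_dset, Finset.mem_union, Finset.mem_sdiff, mem_dset]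
  rw [extv_flp hs]
  by_cases his : i ∈ s <;> by_cases hid : extv g i ≠ extv h i <;>
    simp [his, hid]
  · rw [zmod2_add_one_of_ne hid]
  · push_neg at hid
    rw [hid]
    generalize extv h i = b
    revert b; decide

/-! ### Quadratic moves -/

def quad (g h g' h' : V n) : Prop :=
  ∀ i, (extv g' i = extv g i ∧ extv h' i = extv h i) ∨
       (extv g' i = extv h i ∧ extv h' i = extv g i)

lemma quad_symm {g h g' h' : V n} (hq : quad g h g' h') : quad g' h' g h := by
  intro i
  rcases hq i with ⟨h1, h2⟩ | ⟨h1, h2⟩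
  · exact Or.inl ⟨h1.symm, h2.symm⟩
  · exact Or.inr ⟨h2.symm, h1.symm⟩

lemma quad_flp {s : Finset (Fin (n+1))} (g u : V n) (hs : Even s.card)
    (hsub : s ⊆ dset g u) : quad g u (flp g s) (flp u s) := by
  intro i
  rw [extv_flp hs, extv_flp hs]
  by_cases hi : i ∈ s
  · have hd : extv g i ≠ extv u i := mem_dset.mp (hsub hi)
    rw [if_pos hi]
    exact Or.inr ⟨zmod2_add_one_of_ne hd, zmod2_add_one_of_ne hd.symm⟩
  · rw [if_neg hi, add_zero, add_zero]
    exact Or.inl ⟨rfl, rfl⟩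

lemma two_le_card_dset {g h : V n} (hne : (dset g h).Nonempty) : 2 ≤ (dset g h).card := by
  obtain ⟨k, hk⟩ := even_card_dset g h
  have := Finset.card_pos.mpr hne
  omega

/-- The key reduction: from a partner `u` whose difference set with `g` meets
`dset g h` in at least two places, we can move `(g,u)` to decrease `dset _ h`. -/
lemma reduce (g u h : V n) (hk : 2 ≤ ((dset g u) ∩ (dset g h)).card) :
    ∃ g₂ u₂, quad g u g₂ u₂ ∧ (dset g₂ h).card < (dset g h).card := by
  set E := dset g u with hE
  set D := dset g h with hD
  have hkD : (E ∩ D).card ≤ D.card := Finset.card_le_card (Finset.inter_subset_right)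
  by_cases hpar : Even (E ∩ D).card
  · refine ⟨flp g (E ∩ D), flp u (E ∩ D), quad_flp g u hpar Finset.inter_subset_left, ?_⟩
    rw [dset_flp hpar]
    have h1 : (E ∩ D) \ D = ∅ := by
      rw [Finset.sdiff_eq_empty_iff_subset]; exact Finset.inter_subset_right
    rw [h1, Finset.union_empty, Finset.card_sdiff_of_subset Finset.inter_subset_right, ← hD]
    have hDpos : 0 < D.card := lt_of_lt_of_le (by omega) hkD
    omega
  · -- odd case : pad with an element of E \ D
    have hEe : Even E.card := even_card_dset g u
    have hne : ¬ E ⊆ (E ∩ D) := by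
      intro hsub
      have : E ∩ D = E := le_antisymm Finset.inter_subset_left hsub
      rw [this] at hpar; exact hpar hEe
    obtain ⟨l, hlE, hlD⟩ := Finset.not_subset.mp hne
    have hlnD : l ∉ D := fun h' => hlD (Finset.mem_inter.mpr ⟨hlE, h'⟩)
    have hlnED : l ∉ E ∩ D := hlD
    set s : Finset (Fin (n+1)) := insert l (E ∩ D) with hs
    have hcards : s.card = (E ∩ D).card + 1 := Finset.card_insert_of_notMem hlnED
    have hse : Even s.card := by rw [hcards]; exact Nat.even_add_one.mpr hpar
    have hssub : s ⊆ E := Finset.insert_subset hlE Finset.inter_subset_left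
    refine ⟨flp g s, flp u s, quad_flp g u hse hssub, ?_⟩
    rw [dset_flp hse]
    have h1 : D \ s = D \ (E ∩ D) := by
      rw [hs]; ext j
      simp only [Finset.mem_sdiff, Finset.mem_insert]
      constructor
      · rintro ⟨hj, hj2⟩; exact ⟨hj, fun hh => hj2 (Or.inr hh)⟩
      · rintro ⟨hj, hj2⟩
        refine ⟨hj, fun hh => ?_⟩
        rcases hh with rfl | hh
        · exact hlnD hj
        · exact hj2 hh
    have h2 : s \ D = {l} := by
      rw [hs]; ext j
      simp only [Finset.mem_sdiff, Finset.mem_insert, Finset.mem_singleton, Finset.mem_inter]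
      constructor
      · rintro ⟨rfl | ⟨hj1, hj2⟩, hj3⟩
        · rfl
        · exact absurd hj2 hj3
      · rintro rfl; exact ⟨Or.inl rfl, hlnD⟩
    rw [h1, h2, Finset.card_union_of_disjoint, Finset.card_sdiff_of_subset Finset.inter_subset_right,
      Finset.card_singleton]
    · have hDpos : (2:ℕ) ≤ D.card := le_trans hk hkD
      omega
    · rw [Finset.disjoint_singleton_right, Finset.mem_sdiff]
      rintro ⟨hj, -⟩; exact hlnD hj

/-! ### Counting -/

def cnt (S : Multiset (V n)) (i : Fin (n+1)) (c : ZMod 2) : ℕ :=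
  Multiset.card (S.filter (fun g => extv g i = c))

def Hcc (S T : Multiset (V n)) : Prop := ∀ i c, cnt S i c = cnt T i c

lemma cnt_cons (x : V n) (S : Multiset (V n)) (i : Fin (n+1)) (c : ZMod 2) :
    cnt (x ::ₘ S) i c = (if extv x i = c then 1 else 0) + cnt S i c := by
  unfold cnt
  rw [Multiset.filter_cons]
  split <;> simp [add_comm]

lemma zmod2_cases (c : ZMod 2) : c = 0 ∨ c = 1 := by revert c; decide

lemma cnt_add_cnt (S : Multiset (V n)) (i : Fin (n+1)) {a b : ZMod 2} (hab : a ≠ b) :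
    cnt S i a + cnt S i b = Multiset.card S := by
  unfold cnt
  rw [← Multiset.card_add]
  have : S.filter (fun g => extv g i = b) = S.filter (fun g => ¬ extv g i = a) := by
    apply Multiset.filter_congr
    intro g _
    constructor
    · intro h; rw [h]; exact hab.symm
    · intro h
      rcases zmod2_cases (extv g i) with h1 | h1 <;> rcases zmod2_cases a with h2 | h2 <;>
        rcases zmod2_cases b with h3 | h3 <;> simp_all
  rw [this, Multiset.filter_add_not]

lemma Hcc_card {S T : Multiset (V n)} (h : Hcc S T) : Multiset.card S = Multiset.card T := by
  rw [← cnt_add_cnt S 0 (a := 0) (b := 1) (by decide),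
      ← cnt_add_cnt T 0 (a := 0) (b := 1) (by decide), h 0 0, h 0 1]

/-- Sum of counts of mutually exclusive predicates is at most the size. -/
lemma sum_countP_le (U : Multiset (V n)) (D : Finset (Fin (n+1)))
    (P : Fin (n+1) → V n → Prop) [∀ i, DecidablePred (P i)]
    (hx : ∀ u ∈ U, ∀ i ∈ D, ∀ j ∈ D, P i u → P j u → i = j) :
    (∑ i ∈ D, Multiset.card (U.filter (P i))) ≤ Multiset.card U := by
  induction U using Multiset.induction with
  | empty => simp
  | cons u U ih =>
    have h1 : ∀ i, Multiset.card ((u ::ₘ U).filter (P i)) =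
        (if P i u then 1 else 0) + Multiset.card (U.filter (P i)) := by
      intro i
      rw [Multiset.filter_cons]
      split <;> simp [add_comm]
    simp only [h1, Finset.sum_add_distrib]
    have h2 : (∑ i ∈ D, if P i u then 1 else 0) ≤ 1 := by
      rw [← Finset.card_filter]
      rw [Finset.card_le_one]
      intro a ha b hb
      simp only [Finset.mem_filter] at ha hb
      exact hx u (Multiset.mem_cons_self u U) a ha.1 b hb.1 ha.2 hb.2
    have h3 := ih (fun v hv => hx v (Multiset.mem_cons_of_mem hv))
    simp only [Multiset.card_cons]
    omega

/-- **Key combinatorial lemma**: if `S,T` have equal column counts, `g ∈ S`, `h ∈ T` and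
`g ≠ h`, then one of the two sides contains a partner suitable for a reducing move. -/
lemma exists_reducer {S T : Multiset (V n)} (hcc : Hcc S T) {g h : V n}
    (hg : g ∈ S) (ht : h ∈ T) (hM : (dset g h).Nonempty) :
    (∃ u ∈ S.erase g, 2 ≤ ((dset g u) ∩ (dset g h)).card) ∨
    (∃ t ∈ T.erase h, 2 ≤ ((dset h t) ∩ (dset g h)).card) := by
  by_contra hcon
  push_neg at hcon
  obtain ⟨hS, hT⟩ := hcon
  set D := dset g h with hD
  set d := Multiset.card S with hd
  have hdT : Multiset.card T = d := (Hcc_card hcc).symm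
  have hM2 : 2 ≤ D.card := two_le_card_dset hM
  -- the two exclusive families
  set P : Fin (n+1) → V n → Prop := fun i u => extv u i = extv h i with hP
  set Q : Fin (n+1) → V n → Prop := fun i t => extv t i = extv g i with hQ
  -- exclusivity on S.erase g
  have hexS : ∀ u ∈ S.erase g, ∀ i ∈ D, ∀ j ∈ D, P i u → P j u → i = j := by
    intro u hu i hiD j hjD hPi hPj
    by_contra hij
    apply absurd (hS u hu)
    push_neg
    have hi' : i ∈ dset g u ∩ D := by
      rw [Finset.mem_inter]
      refine ⟨mem_dset.mpr ?_, hiD⟩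
      rw [hPi]; exact mem_dset.mp hiD
    have hj' : j ∈ dset g u ∩ D := by
      rw [Finset.mem_inter]
      refine ⟨mem_dset.mpr ?_, hjD⟩
      rw [hPj]; exact mem_dset.mp hjD
    calc 2 = ({i, j} : Finset (Fin (n+1))).card := by
              rw [Finset.card_insert_of_notMem (by simpa using hij), Finset.card_singleton]
         _ ≤ _ := Finset.card_le_card (by
              intro x hx
              rcases Finset.mem_insert.mp hx with rfl | hx
              · exact hi'
              · rw [Finset.mem_singleton] at hx; subst hx; exact hj')
  have hexT : ∀ t ∈ T.erase h, ∀ i ∈ D, ∀ j ∈ D, Q i t → Q j t → i = j := by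
    intro t hu i hiD j hjD hPi hPj
    by_contra hij
    apply absurd (hT t hu)
    push_neg
    have hi' : i ∈ dset h t ∩ D := by
      rw [Finset.mem_inter]
      refine ⟨mem_dset.mpr ?_, hiD⟩
      rw [hPi]; exact (mem_dset.mp hiD).symm
    have hj' : j ∈ dset h t ∩ D := by
      rw [Finset.mem_inter]
      refine ⟨mem_dset.mpr ?_, hjD⟩
      rw [hPj]; exact (mem_dset.mp hjD).symm
    calc 2 = ({i, j} : Finset (Fin (n+1))).card := by
              rw [Finset.card_insert_of_notMem (by simpa using hij), Finset.card_singleton]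
         _ ≤ _ := Finset.card_le_card (by
              intro x hx
              rcases Finset.mem_insert.mp hx with rfl | hx
              · exact hi'
              · rw [Finset.mem_singleton] at hx; subst hx; exact hj')
  have hSbound := sum_countP_le (S.erase g) D P hexS
  have hTbound := sum_countP_le (T.erase h) D Q hexT
  rw [Multiset.card_erase_of_mem hg] at hSbound
  rw [Multiset.card_erase_of_mem ht, hdT] at hTbound
  -- filter over S equals filter over S.erase g, since g fails P i for i ∈ D
  have hSfull : ∀ i ∈ D, Multiset.card (S.filter (P i)) =
      Multiset.card ((S.erase g).filter (P i)) := by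
    intro i hiD
    conv_lhs => rw [← Multiset.cons_erase hg]
    rw [Multiset.filter_cons, if_neg (mem_dset.mp hiD)]
    simp
  have hTfull : ∀ i ∈ D, Multiset.card (T.filter (Q i)) =
      Multiset.card ((T.erase h).filter (Q i)) := by
    intro i hiD
    conv_lhs => rw [← Multiset.cons_erase ht]
    rw [Multiset.filter_cons, if_neg (Ne.symm (mem_dset.mp hiD))]
    simp
  -- for i ∈ D : cnt_S(P i) + cnt_T(Q i) = d
  have hcol : ∀ i ∈ D, Multiset.card (S.filter (P i)) + Multiset.card (T.filter (Q i)) = d := by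
    intro i hiD
    have h1 : Multiset.card (T.filter (Q i)) = Multiset.card (S.filter (Q i)) := by
      have := hcc i (extv g i)
      unfold cnt at this
      exact this.symm
    rw [h1]
    exact cnt_add_cnt S i (mem_dset.mp hiD).symm
  have hsumcol : (∑ i ∈ D, (Multiset.card (S.filter (P i)) + Multiset.card (T.filter (Q i))))
      = D.card * d := by
    rw [Finset.sum_congr rfl hcol, Finset.sum_const, smul_eq_mul]
  have hS2 : (∑ i ∈ D, Multiset.card (S.filter (P i))) ≤ d - 1 := by
    rw [Finset.sum_congr rfl hSfull]; exact hSbound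
  have hT2 : (∑ i ∈ D, Multiset.card (T.filter (Q i))) ≤ d - 1 := by
    rw [Finset.sum_congr rfl hTfull]; exact hTbound
  rw [Finset.sum_add_distrib] at hsumcol
  have hdpos : 1 ≤ d := by
    rw [hd]
    exact Multiset.card_pos_iff_exists_mem.mpr ⟨g, hg⟩
  have hmul : 2 * d ≤ D.card * d := Nat.mul_le_mul_right d hM2
  omega

/-! ### Moves on multisets and connectivity -/

def mstep (S S₂ : Multiset (V n)) : Prop :=
  ∃ g u g₂ u₂ U, quad g u g₂ u₂ ∧ S = g ::ₘ u ::ₘ U ∧ S₂ = g₂ ::ₘ u₂ ::ₘ U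

lemma mstep_symm : Symmetric (mstep (n := n)) := by
  rintro S S₂ ⟨g, u, g₂, u₂, U, hq, rfl, rfl⟩
  exact ⟨g₂, u₂, g, u, U, quad_symm hq, rfl, rfl⟩

lemma mstep_cons (x : V n) {S T : Multiset (V n)} (h : mstep S T) :
    mstep (x ::ₘ S) (x ::ₘ T) := by
  obtain ⟨g, u, g₂, u₂, U, hq, rfl, rfl⟩ := h
  refine ⟨g, u, g₂, u₂, x ::ₘ U, hq, ?_, ?_⟩ <;>
    rw [Multiset.cons_swap x, Multiset.cons_swap x]

lemma cnt_mstep {S T : Multiset (V n)} (h : mstep S T) : ∀ i c, cnt S i c = cnt T i c := by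
  obtain ⟨g, u, g₂, u₂, U, hq, rfl, rfl⟩ := h
  intro i c
  rw [cnt_cons, cnt_cons, cnt_cons, cnt_cons]
  rcases hq i with ⟨h1, h2⟩ | ⟨h1, h2⟩
  · rw [h1, h2]
  · rw [h1, h2]; ring

abbrev Reach (S T : Multiset (V n)) : Prop := Relation.ReflTransGen mstep S T

lemma Reach_symm : Symmetric (Reach (n := n)) :=
  fun x y h => (@Relation.ReflTransGen.stdSymm _ _ ⟨mstep_symm⟩).symm x y h

lemma Reach_cons (x : V n) {S T : Multiset (V n)} (h : Reach S T) :
    Reach (x ::ₘ S) (x ::ₘ T) := by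
  induction h with
  | refl => exact Relation.ReflTransGen.refl
  | tail _ hst ih => exact Relation.ReflTransGen.tail ih (mstep_cons x hst)

lemma Hcc_of_Reach {S T : Multiset (V n)} (h : Reach S T) : Hcc S T := by
  induction h with
  | refl => exact fun i c => rfl
  | tail _ hst ih => exact fun i c => (ih i c).trans (cnt_mstep hst i c)

/-- After finitely many moves on each side, `S` and `T` acquire a common element. -/
lemma join (M : ℕ) : ∀ (S T : Multiset (V n)) (g h : V n), Hcc S T → g ∈ S → h ∈ T →
    (dset g h).card = M →
    ∃ S' T' x, Reach S S' ∧ Reach T T' ∧ x ∈ S' ∧ x ∈ T' := by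
  induction M using Nat.strong_induction_on with
  | _ M ih =>
    intro S T g h hcc hg ht hM
    rcases Nat.eq_zero_or_pos M with rfl | hMpos
    · -- g = h
      have : dset g h = ∅ := Finset.card_eq_zero.mp hM
      have hgh : g = h := by
        apply extv_injective
        funext i
        by_contra hne
        have : i ∈ dset g h := mem_dset.mpr hne
        simp_all
      exact ⟨S, T, g, Relation.ReflTransGen.refl, Relation.ReflTransGen.refl, hg, hgh ▸ ht⟩
    · have hMne : (dset g h).Nonempty := Finset.card_pos.mp (hM ▸ hMpos)
      rcases exists_reducer hcc hg ht hMne with ⟨u, hu, hk⟩ | ⟨t, htT, hk⟩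
      · obtain ⟨g₂, u₂, hq, hlt⟩ := reduce g u h hk
        set U := (S.erase g).erase u with hU
        have hS1 : S = g ::ₘ u ::ₘ U := by
          rw [hU, Multiset.cons_erase hu, Multiset.cons_erase hg]
        set S₂ := g₂ ::ₘ u₂ ::ₘ U with hS₂
        have hstep : mstep S S₂ := ⟨g, u, g₂, u₂, U, hq, hS1, rfl⟩
        have hcc₂ : Hcc S₂ T := fun i c => ((cnt_mstep hstep i c).symm).trans (hcc i c)
        obtain ⟨S', T', x, hr1, hr2, hx1, hx2⟩ :=
          ih _ (hM ▸ hlt) S₂ T g₂ h hcc₂ (Multiset.mem_cons_self _ _) ht rfl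
        exact ⟨S', T', x, Relation.ReflTransGen.head hstep hr1, hr2, hx1, hx2⟩
      · obtain ⟨h₂, t₂, hq, hlt⟩ := reduce h t g (by rwa [dset_comm h g])
        set U := (T.erase h).erase t with hU
        have hT1 : T = h ::ₘ t ::ₘ U := by
          rw [hU, Multiset.cons_erase htT, Multiset.cons_erase ht]
        set T₂ := h₂ ::ₘ t₂ ::ₘ U with hT₂
        have hstep : mstep T T₂ := ⟨h, t, h₂, t₂, U, hq, hT1, rfl⟩
        have hcc₂ : Hcc S T₂ := fun i c => (hcc i c).trans (cnt_mstep hstep i c)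
        rw [dset_comm h g, dset_comm h₂ g] at hlt
        obtain ⟨S', T', x, hr1, hr2, hx1, hx2⟩ :=
          ih _ (hM ▸ hlt) S T₂ g h₂ hcc₂ hg (Multiset.mem_cons_self _ _) rfl
        exact ⟨S', T', x, hr1, Relation.ReflTransGen.head hstep hr2, hx1, hx2⟩

/-- **Connectivity**: multisets with equal column counts are connected by quadratic moves. -/
theorem conn (d : ℕ) : ∀ (S T : Multiset (V n)), Multiset.card S = d → Hcc S T → Reach S T := by
  induction d using Nat.strong_induction_on with
  | _ d ih =>
    intro S T hcard hcc
    rcases Nat.eq_zero_or_pos d with rfl | hdpos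
    · have hT0 : Multiset.card T = 0 := by rw [← Hcc_card hcc, hcard]
      rw [Multiset.card_eq_zero.mp hcard, Multiset.card_eq_zero.mp hT0]
    · obtain ⟨g, hg⟩ := Multiset.card_pos_iff_exists_mem.mp (hcard ▸ hdpos)
      obtain ⟨h, ht⟩ := Multiset.card_pos_iff_exists_mem.mp
        (by rw [← Hcc_card hcc, hcard]; exact hdpos)
      obtain ⟨S', T', x, hr1, hr2, hx1, hx2⟩ :=
        join (dset g h).card S T g h hcc hg ht rfl
      have hccS' : Hcc S S' := Hcc_of_Reach hr1
      have hccT' : Hcc T T' := Hcc_of_Reach hr2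
      have hcc' : Hcc S' T' := fun i c =>
        ((hccS' i c).symm).trans ((hcc i c).trans (hccT' i c))
      set S₀ := S'.erase x with hS₀
      set T₀ := T'.erase x with hT₀
      have hS' : S' = x ::ₘ S₀ := (Multiset.cons_erase hx1).symm
      have hT' : T' = x ::ₘ T₀ := (Multiset.cons_erase hx2).symm
      have hcc₀ : Hcc S₀ T₀ := by
        intro i c
        have := hcc' i c
        rw [hS', hT', cnt_cons, cnt_cons] at this
        omega
      have hcard₀ : Multiset.card S₀ = d - 1 := by
        have h1 : Multiset.card S' = d := by rw [← Hcc_card hccS', hcard]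
        rw [hS', Multiset.card_cons] at h1
        omega
      have hr3 : Reach S₀ T₀ := ih (d - 1) (by omega) S₀ T₀ hcard₀ hcc₀
      refine hr1.trans (Relation.ReflTransGen.trans ?_ (Reach_symm hr2))
      rw [hS', hT']
      exact Reach_cons x hr3
/-! ### The monomial map on exponents -/

noncomputable def Efn (g : V n) : (Fin (n+1) × ZMod 2) →₀ ℕ :=
  ∑ i : Fin (n+1), Finsupp.single (i, extv g i) 1

lemma prod_X_monomial {ι σ : Type*} [DecidableEq ι] (s : Finset ι) (c : ι → σ) :
    (∏ i ∈ s, (X (c i) : MvPolynomial σ ℂ)) =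
      monomial (∑ i ∈ s, Finsupp.single (c i) 1) 1 := by
  induction s using Finset.induction with
  | empty => simp [monomial_eq]
  | insert a s hx ih =>
    rw [Finset.prod_insert hx, Finset.sum_insert hx, ih]
    rw [show (X (c _) : MvPolynomial σ ℂ) = monomial (Finsupp.single (c _) 1) 1 from rfl,
      monomial_mul, one_mul]

lemma claw_X (g : V n) : clawMap (ZMod 2) n (X g) = monomial (Efn g) 1 := by
  rw [clawMap, aeval_X]
  rw [prod_X_monomial,
    show (X (Fin.last n, ∑ i, g i) : MvPolynomial (Fin (n+1) × ZMod 2) ℂ)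
      = monomial (Finsupp.single (Fin.last n, ∑ i, g i) 1) 1 from rfl,
    monomial_mul, one_mul]
  congr 1
  rw [Efn, Fin.sum_univ_castSucc]
  simp [extv_castSucc, extv_last]

/-- product of variables over a multiset -/
noncomputable def mm (A : Multiset (V n)) : MvPolynomial (V n) ℂ := (A.map X).prod

noncomputable def inv (A : Multiset (V n)) : (Fin (n+1) × ZMod 2) →₀ ℕ := (A.map Efn).sum

lemma mm_cons (x : V n) (A : Multiset (V n)) : mm (x ::ₘ A) = X x * mm A := by
  rw [mm, Multiset.map_cons, Multiset.prod_cons, mm]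

lemma inv_cons (x : V n) (A : Multiset (V n)) : inv (x ::ₘ A) = Efn x + inv A := by
  rw [inv, Multiset.map_cons, Multiset.sum_cons, inv]

lemma claw_mm (A : Multiset (V n)) : clawMap (ZMod 2) n (mm A) = monomial (inv A) 1 := by
  induction A using Multiset.induction with
  | empty =>
    show clawMap (ZMod 2) n 1 = _
    rw [map_one, inv]
    simp [monomial_eq]
  | cons x A ih =>
    rw [mm_cons, map_mul, claw_X, ih, monomial_mul, one_mul, inv_cons]

lemma Efn_apply (g : V n) (i : Fin (n+1)) (c : ZMod 2) :
    Efn g (i, c) = if extv g i = c then 1 else 0 := by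
  rw [Efn, Finsupp.finset_sum_apply]
  rw [Finset.sum_eq_single i]
  · rw [Finsupp.single_apply]
    by_cases h : extv g i = c
    · simp [h]
    · simp [h, fun hh : (i, extv g i) = (i, c) => h (by injection hh)]
  · intro j _ hj
    rw [Finsupp.single_apply, if_neg (fun hh : (j, extv g j) = (i, c) => hj (by injection hh))]
  · intro h
    exact absurd (Finset.mem_univ i) h

lemma inv_apply' (A : Multiset (V n)) (i : Fin (n+1)) (c : ZMod 2) :
    inv A (i, c) = cnt A i c := by
  induction A using Multiset.induction with
  | empty => simp [inv, cnt]
  | cons x A ih =>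
    rw [inv_cons, Finsupp.add_apply, ih, cnt_cons, Efn_apply]

lemma Hcc_of_inv_eq {A B : Multiset (V n)} (h : inv A = inv B) : Hcc A B := by
  intro i c
  rw [← inv_apply', ← inv_apply', h]

lemma quad_Efn {g u g₂ u₂ : V n} (hq : quad g u g₂ u₂) :
    Efn g₂ + Efn u₂ = Efn g + Efn u := by
  rw [Efn, Efn, Efn, Efn, ← Finset.sum_add_distrib, ← Finset.sum_add_distrib]
  apply Finset.sum_congr rfl
  intro i _
  rcases hq i with ⟨h1, h2⟩ | ⟨h1, h2⟩
  · rw [h1, h2]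
  · rw [h1, h2]; exact add_comm _ _

/-! ### The quadric ideal and the binomial lemma -/

noncomputable def Jideal (n : ℕ) : Ideal (MvPolynomial (V n) ℂ) :=
  Ideal.span {p | p ∈ RingHom.ker (clawMap (ZMod 2) n) ∧ p.IsHomogeneous 2}

lemma reach_binom {A B : Multiset (V n)} (h : Reach A B) : mm A - mm B ∈ Jideal n := by
  induction h with
  | refl => rw [sub_self]; exact zero_mem _
  | @tail B C _ hst ih =>
    have h2 : mm B - mm C ∈ Jideal n := by
      obtain ⟨g, u, g₂, u₂, U, hq, rfl, rfl⟩ := hst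
      have hbin : (X g * X u - X g₂ * X u₂ : MvPolynomial (V n) ℂ) ∈
          {p : MvPolynomial (V n) ℂ | p ∈ RingHom.ker (clawMap (ZMod 2) n) ∧
            p.IsHomogeneous 2} := by
        constructor
        · rw [RingHom.mem_ker]
          have : ∀ a b : V n, clawMap (ZMod 2) n (X a * X b) = monomial (Efn a + Efn b) 1 := by
            intro a b
            rw [map_mul, claw_X, claw_X, monomial_mul, one_mul]
          rw [map_sub, this, this, quad_Efn hq, sub_self]
        · exact ((isHomogeneous_X ℂ g).mul (isHomogeneous_X ℂ u)).sub
            ((isHomogeneous_X ℂ g₂).mul (isHomogeneous_X ℂ u₂))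
      have heq : mm (g ::ₘ u ::ₘ U) - mm (g₂ ::ₘ u₂ ::ₘ U)
          = (X g * X u - X g₂ * X u₂) * mm U := by
        rw [mm_cons, mm_cons, mm_cons, mm_cons]; ring
      rw [heq]
      exact Ideal.mul_mem_right _ _ (Ideal.subset_span hbin)
    have : mm A - mm C = (mm A - mm B) + (mm B - mm C) := by ring
    rw [this]
    exact add_mem ih h2

lemma binom_mem {A B : Multiset (V n)} (h : inv A = inv B) : mm A - mm B ∈ Jideal n := by
  have hcc : Hcc A B := Hcc_of_inv_eq h
  exact reach_binom (conn (Multiset.card A) A B rfl hcc)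

/-! ### Monomials vs multisets -/

lemma mm_toMultiset (β : (V n) →₀ ℕ) : mm β.toMultiset = monomial β 1 := by
  induction β using Finsupp.induction with
  | zero => rw [Finsupp.toMultiset_zero, mm]; simp [monomial_eq]
  | single_add a b f ha hb ih =>
    rw [Finsupp.toMultiset_add, mm, Multiset.map_add, Multiset.prod_add, ← mm, ← mm, ih,
      Finsupp.toMultiset_single, mm, Multiset.map_nsmul]
    rw [Multiset.map_singleton, Multiset.prod_nsmul, Multiset.prod_singleton,
      X_pow_eq_monomial, monomial_mul, one_mul]

noncomputable def L (β : (V n) →₀ ℕ) : (Fin (n+1) × ZMod 2) →₀ ℕ := inv β.toMultiset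

lemma claw_monomial (β : (V n) →₀ ℕ) (c : ℂ) :
    clawMap (ZMod 2) n (monomial β c) = monomial (L β) c := by
  have h1 : (monomial β c : MvPolynomial (V n) ℂ) = C c * monomial β 1 := by
    rw [C_mul_monomial, mul_one]
  rw [h1, map_mul, show (C c : MvPolynomial (V n) ℂ) = algebraMap ℂ _ c from rfl,
    AlgHom.commutes, ← mm_toMultiset, claw_mm, ← L]
  rw [show (algebraMap ℂ (MvPolynomial (Fin (n+1) × ZMod 2) ℂ)) c = C c from rfl,
    C_mul_monomial, mul_one]

/-! ### The kernel is contained in the quadric ideal -/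

lemma ker_le_J (N : ℕ) : ∀ p : MvPolynomial (V n) ℂ, p.support.card ≤ N →
    clawMap (ZMod 2) n p = 0 → p ∈ Jideal n := by
  induction N with
  | zero =>
    intro p hp _
    have : p.support = ∅ := Finset.card_eq_zero.mp (Nat.le_zero.mp hp)
    rw [MvPolynomial.support_eq_empty.mp this]
    exact zero_mem _
  | succ N ih =>
    intro p hcard hker
    by_cases hp0 : p = 0
    · rw [hp0]; exact zero_mem _
    obtain ⟨α₀, hα₀⟩ := Finset.nonempty_of_ne_empty
      (fun h => hp0 (MvPolynomial.support_eq_empty.mp h))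
    set t := L α₀ with ht
    set F := p.support.filter (fun β => L β = t) with hF
    have hα₀F : α₀ ∈ F := Finset.mem_filter.mpr ⟨hα₀, rfl⟩
    have hFsub : F ⊆ p.support := Finset.filter_subset _ _
    -- the coefficients over F sum to zero
    have hsum0 : (∑ β ∈ F, coeff β p) = 0 := by
      have h1 : clawMap (ZMod 2) n p = ∑ β ∈ p.support, monomial (L β) (coeff β p) := by
        conv_lhs => rw [as_sum p]
        rw [map_sum]
        exact Finset.sum_congr rfl fun β _ => claw_monomial β (coeff β p)
      have h2 : coeff t (clawMap (ZMod 2) n p) = ∑ β ∈ F, coeff β p := by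
        rw [h1, coeff_sum, hF, Finset.sum_filter]
        exact Finset.sum_congr rfl fun β _ => by rw [coeff_monomial]
      rw [hker] at h2
      simp at h2
      exact h2.symm
    set q : MvPolynomial (V n) ℂ :=
      ∑ β ∈ F, (coeff β p) • (monomial β 1 - monomial α₀ 1) with hq
    have hqJ : q ∈ Jideal n := by
      apply Submodule.sum_mem
      intro β hβ
      rw [MvPolynomial.smul_eq_C_mul]
      apply Ideal.mul_mem_left
      have hLβ : L β = L α₀ := (Finset.mem_filter.mp hβ).2
      have := binom_mem (A := β.toMultiset) (B := α₀.toMultiset)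
        (by rw [← L, ← L, hLβ])
      rwa [mm_toMultiset, mm_toMultiset] at this
    have hqker : clawMap (ZMod 2) n q = 0 := by
      rw [hq, map_sum]
      apply Finset.sum_eq_zero
      intro β hβ
      rw [map_smul, map_sub, claw_monomial, claw_monomial, (Finset.mem_filter.mp hβ).2,
        sub_self, smul_zero]
    -- rewrite q as a plain sum of monomials
    have hq2 : q = ∑ β ∈ F, monomial β (coeff β p) := by
      rw [hq]
      have : ∀ β ∈ F, (coeff β p) • ((monomial β 1 : MvPolynomial (V n) ℂ) - monomial α₀ 1)
          = monomial β (coeff β p) - (coeff β p) • monomial α₀ 1 := by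
        intro β _
        rw [smul_sub, MvPolynomial.smul_monomial, smul_eq_mul, mul_one]
      rw [Finset.sum_congr rfl this, Finset.sum_sub_distrib, ← Finset.sum_smul, hsum0,
        zero_smul, sub_zero]
    set p' := p - q with hp'
    have hp'ker : clawMap (ZMod 2) n p' = 0 := by
      rw [hp', map_sub, hker, hqker, sub_zero]
    have hcoeff : ∀ γ, coeff γ p' = coeff γ p - (if γ ∈ F then coeff γ p else 0) := by
      intro γ
      rw [hp', hq2, MvPolynomial.coeff_sub, coeff_sum]
      congr 1
      rw [Finset.sum_congr rfl (fun β _ => by rw [coeff_monomial] : ∀ β ∈ F, _ = _)]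
      exact Finset.sum_ite_eq' F γ (fun β => coeff β p)
    have hsub : p'.support ⊆ p.support \ F := by
      intro γ hγ
      have hne := MvPolynomial.mem_support_iff.mp hγ
      rw [hcoeff γ] at hne
      by_cases hγF : γ ∈ F
      · rw [if_pos hγF, sub_self] at hne; exact absurd rfl hne
      · rw [if_neg hγF, sub_zero] at hne
        exact Finset.mem_sdiff.mpr ⟨MvPolynomial.mem_support_iff.mpr hne, hγF⟩
    have hcard' : p'.support.card ≤ N := by
      have h1 : (p.support \ F).card = p.support.card - F.card :=
        Finset.card_sdiff_of_subset hFsub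
      have h2 : 1 ≤ F.card := Finset.card_pos.mpr ⟨α₀, hα₀F⟩
      have h3 := Finset.card_le_card hsub
      omega
    have hp'J : p' ∈ Jideal n := ih p' hcard' hp'ker
    have : p = p' + q := by rw [hp']; ring
    rw [this]
    exact add_mem hp'J hqJ

theorem ker_eq_J : RingHom.ker (clawMap (ZMod 2) n) = Jideal n := by
  apply le_antisymm
  · intro p hp
    exact ker_le_J p.support.card p le_rfl (RingHom.mem_ker.mp hp)
  · rw [Jideal, Ideal.span_le]
    exact fun p hp => hp.1

/-- **Theorem.** For every `n ≥ 2`, the toric ideal `I_{ℤ/2ℤ,n}` is generated by the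
homogeneous polynomials of degree `2` that it contains. -/
theorem clawIdeal_zmod2_generated_in_degree_two (n : ℕ) (hn : 2 ≤ n) :
    clawIdeal (ZMod 2) n =
      Ideal.span {p : MvPolynomial (Fin n → ZMod 2) ℂ |
        p ∈ clawIdeal (ZMod 2) n ∧ p.IsHomogeneous 2} := by
  unfold clawIdeal
  exact ker_eq_J
end

section
/- For any finite abelian group G, the Jukes-Cantor labeling function L : G → {0,1}, defined by L(g) = 0 if g = 0 and L(g) = 1 otherwise, is friendly. -/
open Finset

lemma sum_update1 {ι G : Type} [Fintype ι] [DecidableEq ι] [AddCommGroup G]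
    (f : ι → G) (i : ι) (a : G) :
    ∑ k, Function.update f i a k = ∑ k, f k - f i + a := by
  rw [Finset.sum_update_of_mem (Finset.mem_univ i),
    Finset.sum_sdiff_eq_sub (Finset.subset_univ {i})]
  simp; abel

lemma sum_update2 {ι G : Type} [Fintype ι] [DecidableEq ι] [AddCommGroup G]
    (f : ι → G) {i j : ι} (hij : j ≠ i) (a b : G) :
    ∑ k, Function.update (Function.update f i a) j b k
      = ∑ k, f k - f i - f j + a + b := by
  rw [sum_update1, sum_update1, Function.update_of_ne hij]
  abel

lemma sum_update3 {ι G : Type} [Fintype ι] [DecidableEq ι] [AddCommGroup G]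
    (f : ι → G) {i j l : ι} (hij : j ≠ i) (hli : l ≠ i) (hlj : l ≠ j) (a b c : G) :
    ∑ k, Function.update (Function.update (Function.update f i a) j b) l c k
      = ∑ k, f k - f i - f j - f l + a + b + c := by
  rw [sum_update1, sum_update2 f hij, Function.update_of_ne hlj, Function.update_of_ne hli]
  abel

/-- Core lemma: one coordinate of a zero-sum tuple can be changed to any nonzero value
while keeping zero-sum and the support. -/
lemma key {G : Type} [AddCommGroup G] [Fintype G] [DecidableEq G] {m : ℕ}
    (c : Fin m → G) (hc : ∑ k, c k = 0) (i : Fin m) (d : G)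
    (hd : d ≠ 0) (hci : c i ≠ 0) (hdc : d ≠ c i) :
    ∃ c' : Fin m → G, ∑ k, c' k = 0 ∧ (∀ j, (c' j = 0 ↔ c j = 0)) ∧ c' i = d := by
  -- there is another nonzero coordinate
  obtain ⟨j, hji, hcj⟩ : ∃ j, j ≠ i ∧ c j ≠ 0 := by
    by_contra hcon
    push_neg at hcon
    have : ∑ k, c k = c i := Finset.sum_eq_single i (fun b _ hb => hcon b hb) (by simp)
    exact hci (this.symm.trans hc)
  by_cases hB : ∃ l, l ≠ i ∧ l ≠ j ∧ c l ≠ 0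
  · -- three nonzero coordinates
    obtain ⟨l, hli, hlj, hcl⟩ := hB
    -- |G| ≥ 3
    have hcard : 3 ≤ Fintype.card G := by
      have h3 : ({0, c i, d} : Finset G).card = 3 := by
        rw [Finset.card_insert_of_notMem (by simp [Ne.symm hci, Ne.symm hd]),
          Finset.card_insert_of_notMem (by simpa using Ne.symm hdc)]
        simp
      calc 3 = ({0, c i, d} : Finset G).card := h3.symm
        _ ≤ _ := Finset.card_le_univ _
    set T : G := c i + c j + c l - d with hT
    obtain ⟨x, hx⟩ : ∃ x : G, x ∉ ({0, T} : Finset G) := by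
      by_contra hcon
      push_neg at hcon
      have h1 : (Finset.univ : Finset G).card ≤ ({0, T} : Finset G).card :=
        Finset.card_le_card (fun x _ => hcon x)
      have h2 : ({0, T} : Finset G).card ≤ 2 := by
        apply le_trans (Finset.card_insert_le _ _)
        simp
      rw [Finset.card_univ] at h1
      omega
    simp only [Finset.mem_insert, Finset.mem_singleton, not_or] at hx
    have hTx : T - x ≠ 0 := sub_ne_zero.mpr (Ne.symm hx.2)
    refine ⟨Function.update (Function.update (Function.update c i d) j x) l (T - x),
      ?_, ?_, ?_⟩
    · rw [sum_update3 c hji hli hlj]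
      rw [hc, hT]; abel
    · intro k
      rcases eq_or_ne k l with rfl | hkl
      · simp [Function.update_of_ne, hcl, hTx]
      rcases eq_or_ne k j with rfl | hkj
      · simp [Function.update_of_ne hkl, hcj, hx.1]
      rcases eq_or_ne k i with rfl | hki
      · simp [Function.update_of_ne hkl, Function.update_of_ne hkj, hd, hci]
      · simp [Function.update_of_ne hkl, Function.update_of_ne hkj,
          Function.update_of_ne hki]
    · rw [Function.update_of_ne (Ne.symm hli), Function.update_of_ne (Ne.symm hji),
        Function.update_self]
  · -- exactly two nonzero coordinates: i and j, with c j = -c i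
    push_neg at hB
    have hsum2 : c i + c j = 0 := by
      have h1 : ∑ k ∈ ({i, j} : Finset (Fin m)), c k = ∑ k, c k :=
        Finset.sum_subset (Finset.subset_univ _) (fun k _ hk => by
          simp only [Finset.mem_insert, Finset.mem_singleton, not_or] at hk
          exact hB k hk.1 hk.2)
      rw [Finset.sum_pair (Ne.symm hji)] at h1
      rw [h1, hc]
    refine ⟨Function.update (Function.update c i d) j (-d), ?_, ?_, ?_⟩
    · rw [sum_update2 c hji, hc]
      rw [show c j = -(c i) from eq_neg_of_add_eq_zero_right hsum2]
      abel
    · intro k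
      rcases eq_or_ne k j with rfl | hkj
      · simp [hcj, hd]
      rcases eq_or_ne k i with rfl | hki
      · simp [Function.update_of_ne hkj, hd, hci]
      · simp [Function.update_of_ne hkj, Function.update_of_ne hki]
    · rw [Function.update_of_ne (Ne.symm hji), Function.update_self]



lemma mem_zset_iff {G : Type} [AddCommGroup G] {m : ℕ} (g : Fin m → G) :
    g ∈ ZSet G m ↔ ∑ i : Fin m, (if (i : ℕ) < m - 1 then g i else -(g i)) = 0 := by
  classical
  rw [ZSet, Set.mem_setOf_eq,
    ← Finset.sum_filter_add_sum_filter_not Finset.univ (fun i : Fin m => (i : ℕ) < m - 1)]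
  rw [Finset.sum_ite_of_true (by intro i hi; exact (Finset.mem_filter.mp hi).2),
    Finset.sum_ite_of_false (by intro i hi; exact (Finset.mem_filter.mp hi).2)]
  rw [Finset.sum_neg_distrib, add_neg_eq_zero]

/-- **Example (the Jukes-Cantor labeling function is friendly).** For any finite abelian
group `G`, the labeling `L(g) = 0` if `g = 0` and `L(g) = 1` otherwise is friendly. -/
theorem jukesCantor_labeling_friendly (G : Type) [AddCommGroup G] [Fintype G]
    [DecidableEq G] :
    Friendly (fun g : G => if g = 0 then (0 : Fin 2) else 1) := by
  intro m hm g hg i h hL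
  simp only at hL
  by_cases hgi : g i = 0
  · have hh : h = 0 := by
      by_contra hne
      simp [hgi, hne] at hL
    exact ⟨g, hg, fun j => rfl, by rw [hh, hgi]⟩
  by_cases hh0 : h = 0
  · exfalso; simp [hgi, hh0] at hL
  by_cases hhg : h = g i
  · exact ⟨g, hg, fun j => rfl, hhg.symm⟩
  set c : Fin m → G := fun k => if (k : ℕ) < m - 1 then g k else -(g k) with hcdef
  have hc : ∑ k, c k = 0 := (mem_zset_iff g).mp hg
  have hci : c i ≠ 0 := by
    rw [hcdef]; simp only; split <;> simp [hgi]
  by_cases hi : (i : ℕ) < m - 1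
  case' pos => set d : G := h with hddef
  case' neg => set d : G := -h with hddef
  all_goals {
    first
    | (have hd : d ≠ 0 := by simpa [hddef] using hh0)
    have hdc : d ≠ c i := by
      rw [hddef, hcdef]; simp only [hi, if_pos, if_neg, ite_true, ite_false]
      first
      | exact hhg
      | simpa using hhg
    obtain ⟨c', hc'sum, hc'supp, hc'i⟩ := key c hc i d hd hci hdc
    refine ⟨fun k => if (k : ℕ) < m - 1 then c' k else -(c' k), ?_, ?_, ?_⟩
    · rw [mem_zset_iff]
      have heach : ∀ k : Fin m,
          (if (k : ℕ) < m - 1 then (if (k : ℕ) < m - 1 then c' k else -(c' k))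
            else -(if (k : ℕ) < m - 1 then c' k else -(c' k))) = c' k := by
        intro k; by_cases hk : (k : ℕ) < m - 1 <;> simp [hk]
      simp only [heach]
      exact hc'sum
    · intro j
      have hsupp := hc'supp j
      rw [hcdef] at hsupp
      simp only at hsupp ⊢
      by_cases hj : (j : ℕ) < m - 1 <;> simp only [hj, if_true, if_false, ite_true,
        ite_false, neg_eq_zero] at hsupp ⊢ <;> simp only [hsupp]
    · simp only [hi, ite_true, ite_false, hc'i, hddef, neg_neg]
  }
end

section
/- The Kimura 2-parameter labeling function L : ℤ/2ℤ × ℤ/2ℤ → {0,1,2}, defined by L((0,0)) = 0, L((0,1)) = 1, and L((1,0)) = L((1,1)) = 2, is friendly. -/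
/-- The Kimura 2-parameter labeling function. -/
abbrev Kim : ZMod 2 × ZMod 2 → Fin 3 :=
  fun g => if g = (0, 0) then (0 : Fin 3) else if g = (0, 1) then 1 else 2

lemma kim_aux : ∀ a b : ZMod 2 × ZMod 2, Kim a = Kim b → a ≠ b →
    a = b + (0, 1) ∧ b.1 = 1 := by decide

lemma kim_add : ∀ b : ZMod 2 × ZMod 2, b.1 = 1 → Kim (b + (0, 1)) = Kim b := by decide

lemma two_tor : ∀ x : ZMod 2 × ZMod 2, x + x = 0 := by decide

lemma zmod2_ne_one : ∀ x : ZMod 2, x ≠ 1 → x = 0 := by decide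

/-- **Example (the Kimura 2-parameter labeling function is friendly).** The labeling
`L (0,0) = 0`, `L (0,1) = 1`, `L (1,0) = L (1,1) = 2` on `ℤ/2ℤ × ℤ/2ℤ` is friendly. -/
theorem kimura2_labeling_friendly :
    Friendly (fun g : ZMod 2 × ZMod 2 =>
      if g = (0, 0) then (0 : Fin 3) else if g = (0, 1) then 1 else 2) := by
  intro m _hm g hg i h hL
  by_cases he : h = g i
  · exact ⟨g, hg, fun j => rfl, he.symm⟩
  obtain ⟨hh, hg1⟩ := kim_aux h (g i) hL he
  have hg' : (∑ k ∈ Finset.univ.filter fun k : Fin m => (k : ℕ) < m - 1, g k) =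
      ∑ k ∈ Finset.univ.filter fun k : Fin m => ¬ (k : ℕ) < m - 1, g k := hg
  -- total sum is zero
  have hsum : ∑ k, g k = 0 := by
    rw [← Finset.sum_filter_add_sum_filter_not Finset.univ
      (fun k : Fin m => (k : ℕ) < m - 1) g, hg']
    exact two_tor _
  have h1 : (∑ k, (g k).1) = 0 := by
    have := congrArg Prod.fst hsum
    simpa [Prod.fst_sum] using this
  set A : Finset (Fin m) := Finset.univ.filter (fun k => (g k).1 = 1) with hAdef
  have e1 : ∑ k ∈ A, (g k).1 = ∑ k, (g k).1 :=
    Finset.sum_subset (Finset.subset_univ A)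
      (fun x _ hx => zmod2_ne_one _ (by simpa [hAdef] using hx))
  have e2 : ∑ k ∈ A, (g k).1 = (A.card : ZMod 2) := by
    rw [Finset.sum_congr rfl (fun x hx => (Finset.mem_filter.mp hx).2)]
    simp
    rfl
  have hA : (A.card : ZMod 2) = 0 := e2.symm.trans (e1.trans h1)
  have hdvd : 2 ∣ A.card := by
    exact (ZMod.natCast_eq_zero_iff A.card 2).mp hA
  have hiA : i ∈ A := Finset.mem_filter.mpr ⟨Finset.mem_univ i, hg1⟩
  have hcard : 1 < A.card := by
    rcases hdvd with ⟨c, hc⟩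
    have : 0 < A.card := Finset.card_pos.mpr ⟨i, hiA⟩
    omega
  obtain ⟨j, hjA, hji⟩ := Finset.exists_mem_ne hcard i
  have hgj : (g j).1 = 1 := (Finset.mem_filter.mp hjA).2
  set δ : Fin m → ZMod 2 × ZMod 2 := fun k => if k = i ∨ k = j then (0, 1) else 0 with hδ
  have hδi : δ i = (0, 1) := by simp [hδ]
  have hδj : δ j = (0, 1) := by simp [hδ]
  have hδo : ∀ k, k ≠ i → k ≠ j → δ k = 0 := by
    intro k hk1 hk2; simp [hδ, hk1, hk2]
  have hδsum : ∑ k, δ k = 0 := by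
    have hsub : ∑ k ∈ ({j, i} : Finset (Fin m)), δ k = ∑ k, δ k :=
      Finset.sum_subset (Finset.subset_univ _) (fun x _ hx => by
        simp only [Finset.mem_insert, Finset.mem_singleton, not_or] at hx
        exact hδo x hx.2 hx.1)
    rw [← hsub, Finset.sum_pair hji, hδi, hδj]
    exact two_tor _
  have key : (∑ k ∈ Finset.univ.filter fun k : Fin m => (k : ℕ) < m - 1, δ k) =
      ∑ k ∈ Finset.univ.filter fun k : Fin m => ¬ (k : ℕ) < m - 1, δ k := by
    have h0 : (∑ k ∈ Finset.univ.filter fun k : Fin m => (k : ℕ) < m - 1, δ k) +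
        ∑ k ∈ Finset.univ.filter fun k : Fin m => ¬ (k : ℕ) < m - 1, δ k = 0 := by
      rw [Finset.sum_filter_add_sum_filter_not]
      exact hδsum
    have hn := neg_eq_of_add_eq_zero_left
      (two_tor (∑ k ∈ Finset.univ.filter fun k : Fin m => ¬ (k : ℕ) < m - 1, δ k))
    rw [eq_neg_of_add_eq_zero_left h0, hn]
  refine ⟨fun k => g k + δ k, ?_, ?_, ?_⟩
  · show (∑ k ∈ Finset.univ.filter fun k : Fin m => (k : ℕ) < m - 1, (g k + δ k)) =
      ∑ k ∈ Finset.univ.filter fun k : Fin m => ¬ (k : ℕ) < m - 1, (g k + δ k)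
    rw [Finset.sum_add_distrib, Finset.sum_add_distrib, hg', key]
  · intro k
    by_cases hk1 : k = i
    · subst hk1
      show Kim (g k + δ k) = Kim (g k)
      rw [hδi]
      exact kim_add _ hg1
    by_cases hk2 : k = j
    · subst hk2
      show Kim (g k + δ k) = Kim (g k)
      rw [hδj]
      exact kim_add _ hgj
    · show Kim (g k + δ k) = Kim (g k)
      rw [hδo k hk1 hk2, add_zero]
  · show g i + δ i = h
    rw [hδi, ← hh]
end

section
/- Let φ : ℂ[q_{ijkl} : i,j,k,l ∈ ℤ/2ℤ] → ℂ[a_0,a_1,b_0,b_1,c_0,c_1,d_0,d_1,e_0,e_1,f_0,f_1,g_0,g_1] be the ℂ-algebra homomorphism sending q_{ijkl} ↦ a_i b_j c_k d_l e_{i+j} f_{k+l} g_{i+j+k+l} (indices in ℤ/2ℤ). Then the kernel of φ is generated by the 2 × 2 minors of the four 2 × 4 matrices: for each i ∈ {0,1}, the matrix with rows (q_{0i00}, q_{0i01}, q_{0i10}, q_{0i11}) and (q_{1(1+i)00}, q_{1(1+i)01}, q_{1(1+i)10}, q_{1(1+i)11}), and the matrix with rows (q_{00i0}, q_{01i0},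 q_{10i0}, q_{11i0}) and (q_{00(1+i)1}, q_{01(1+i)1}, q_{10(1+i)1}, q_{11(1+i)1}). -/
open MvPolynomial

/-- The monomial map of the Jukes–Cantor binary model on the balanced binary tree with
four leaves, in Fourier coordinates: `q_{ijkl} ↦ a_i b_j c_k d_l e_{i+j} f_{k+l} g_{i+j+k+l}`.
The seven edges `a,b,c,d,e,f,g` are indexed by `Fin 7`. -/
noncomputable def phiJC4 :
    MvPolynomial (Fin 4 → ZMod 2) ℂ →ₐ[ℂ] MvPolynomial (Fin 7 × ZMod 2) ℂ :=
  aeval fun v =>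
    X (0, v 0) * X (1, v 1) * X (2, v 2) * X (3, v 3) *
    X (4, v 0 + v 1) * X (5, v 2 + v 3) * X (6, v 0 + v 1 + v 2 + v 3)

/-- The `2 × 2` minors of the four `2 × 4` matrices: for `i ∈ {0,1}`, the matrix with rows
`(q_{0i00}, q_{0i01}, q_{0i10}, q_{0i11})`, `(q_{1(1+i)00}, q_{1(1+i)01}, q_{1(1+i)10},
q_{1(1+i)11})` and the matrix with rows `(q_{00i0}, q_{01i0}, q_{10i0}, q_{11i0})`,
`(q_{00(1+i)1}, q_{01(1+i)1}, q_{10(1+i)1}, q_{11(1+i)1})`. -/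
def jc4Minors : Set (MvPolynomial (Fin 4 → ZMod 2) ℂ) :=
  {p | ∃ i k l k' l' : ZMod 2,
      p = X ![0, i, k, l] * X ![1, 1 + i, k', l'] -
          X ![0, i, k', l'] * X ![1, 1 + i, k, l]} ∪
  {p | ∃ i k l k' l' : ZMod 2,
      p = X ![k, l, i, 0] * X ![k', l', 1 + i, 1] -
          X ![k', l', i, 0] * X ![k, l, 1 + i, 1]}

namespace JC4
abbrev V := Fin 4 → ZMod 2

def coord : Fin 7 → V → ZMod 2
  | 0 => fun v => v 0
  | 1 => fun v => v 1
  | 2 => fun v => v 2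
  | 3 => fun v => v 3
  | 4 => fun v => v 0 + v 1
  | 5 => fun v => v 2 + v 3
  | 6 => fun v => v 0 + v 1 + v 2 + v 3

noncomputable def expv (v : V) : (Fin 7 × ZMod 2) →₀ ℕ :=
  ∑ i : Fin 7, Finsupp.single (i, coord i v) 1

lemma expv_apply (v : V) (i : Fin 7) (s : ZMod 2) :
    expv v (i, s) = if coord i v = s then 1 else 0 := by
  rw [expv, Fin.sum_univ_seven]
  fin_cases i <;>
    simp (config := { decide := true }) only [coord, Finsupp.add_apply, Finsupp.single_apply,
      Prod.mk.injEq, false_and, true_and, if_false, zero_add, add_zero] <;> rfl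

noncomputable def Pm (S : Multiset V) : MvPolynomial V ℂ := (S.map X).prod

noncomputable def WS (S : Multiset V) : (Fin 7 × ZMod 2) →₀ ℕ := (S.map expv).sum

lemma WS_apply (S : Multiset V) (i : Fin 7) (s : ZMod 2) :
    WS S (i, s) = S.countP (fun v => coord i v = s) := by
  induction S using Multiset.induction with
  | empty => simp [WS]
  | cons a S ih =>
    simp only [WS, Multiset.map_cons, Multiset.sum_cons, Multiset.countP_cons] at *
    rw [Finsupp.add_apply, ih, expv_apply]
    split <;> simp_all [add_comm]

lemma eta4 (v : V) : v = ![v 0, v 1, v 2, v 3] := by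
  funext j; fin_cases j <;> rfl

lemma phi_X (v : V) :
    phiJC4 (X v) = MvPolynomial.monomial (expv v) 1 := by
  have : phiJC4 (X v) = X (0, v 0) * X (1, v 1) * X (2, v 2) * X (3, v 3) *
      X (4, v 0 + v 1) * X (5, v 2 + v 3) * X (6, v 0 + v 1 + v 2 + v 3) := by
    simp [phiJC4]
  rw [this, expv, Fin.sum_univ_seven]
  simp only [X, monomial_mul, one_mul, coord]

lemma phi_Pm (S : Multiset V) :
    phiJC4 (Pm S) = MvPolynomial.monomial (WS S) 1 := by
  induction S using Multiset.induction with
  | empty => simp [Pm, WS]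
  | cons a S ih =>
    simp only [Pm, WS, Multiset.map_cons, Multiset.prod_cons, Multiset.sum_cons, map_mul] at *
    rw [ih, phi_X, monomial_mul, one_mul]

@[simp] lemma vec4_0 (a b c d : ZMod 2) : ![a,b,c,d] 0 = a := rfl
@[simp] lemma vec4_1 (a b c d : ZMod 2) : ![a,b,c,d] 1 = b := rfl
@[simp] lemma vec4_2 (a b c d : ZMod 2) : ![a,b,c,d] 2 = c := rfl
@[simp] lemma vec4_3 (a b c d : ZMod 2) : ![a,b,c,d] 3 = d := rfl

def hd (v : V) : ZMod 2 × ZMod 2 := (v 0, v 1)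
def tl (v : V) : ZMod 2 × ZMod 2 := (v 2, v 3)
def cl (v : V) : ZMod 2 × ZMod 2 := (v 0 + v 1, v 2 + v 3)

lemma hdtl_ext {x y : V} (h1 : hd x = hd y) (h2 : tl x = tl y) : x = y := by
  simp only [hd, tl, Prod.mk.injEq] at h1 h2
  funext j; fin_cases j
  · exact h1.1
  · exact h1.2
  · exact h2.1
  · exact h2.2

def Mv (S S' : Multiset V) : Prop :=
  (∃ i k l k' l' : ZMod 2, ∃ T : Multiset V,
      S  = ![0,i,k,l] ::ₘ ![1,1+i,k',l'] ::ₘ T ∧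
      S' = ![0,i,k',l'] ::ₘ ![1,1+i,k,l] ::ₘ T) ∨
  (∃ i k l k' l' : ZMod 2, ∃ T : Multiset V,
      S  = ![k,l,i,0] ::ₘ ![k',l',1+i,1] ::ₘ T ∧
      S' = ![k',l',i,0] ::ₘ ![k,l,1+i,1] ::ₘ T)

def Rel : Multiset V → Multiset V → Prop := Relation.ReflTransGen Mv

lemma Mv_sub_mem {S S'} (h : Mv S S') : Pm S - Pm S' ∈ Ideal.span jc4Minors := by
  rcases h with ⟨i,k,l,k',l',T,rfl,rfl⟩ | ⟨i,k,l,k',l',T,rfl,rfl⟩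
  · have hm : (X ![0,i,k,l] * X ![1,1+i,k',l'] -
        X ![0,i,k',l'] * X ![1,1+i,k,l] : MvPolynomial V ℂ) ∈ jc4Minors :=
      by simp only [jc4Minors, Set.mem_union, Set.mem_setOf_eq]; exact Or.inl ⟨i,k,l,k',l',rfl⟩
    have h2 := Ideal.mul_mem_right (Pm T) _ (Ideal.subset_span hm)
    have e : (X ![0,i,k,l] * X ![1,1+i,k',l'] -
        X ![0,i,k',l'] * X ![1,1+i,k,l] : MvPolynomial V ℂ) * Pm T
        = Pm (![0,i,k,l] ::ₘ ![1,1+i,k',l'] ::ₘ T) - Pm (![0,i,k',l'] ::ₘ ![1,1+i,k,l] ::ₘ T) := by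
      simp only [Pm, Multiset.map_cons, Multiset.prod_cons]; ring
    rwa [e] at h2
  · have hm : (X ![k,l,i,0] * X ![k',l',1+i,1] -
        X ![k',l',i,0] * X ![k,l,1+i,1] : MvPolynomial V ℂ) ∈ jc4Minors :=
      by simp only [jc4Minors, Set.mem_union, Set.mem_setOf_eq]; exact Or.inr ⟨i,k,l,k',l',rfl⟩
    have h2 := Ideal.mul_mem_right (Pm T) _ (Ideal.subset_span hm)
    have e : (X ![k,l,i,0] * X ![k',l',1+i,1] -
        X ![k',l',i,0] * X ![k,l,1+i,1] : MvPolynomial V ℂ) * Pm T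
        = Pm (![k,l,i,0] ::ₘ ![k',l',1+i,1] ::ₘ T) - Pm (![k',l',i,0] ::ₘ ![k,l,1+i,1] ::ₘ T) := by
      simp only [Pm, Multiset.map_cons, Multiset.prod_cons]; ring
    rwa [e] at h2

lemma Rel_sub_mem {S S'} (h : Rel S S') : Pm S - Pm S' ∈ Ideal.span jc4Minors := by
  induction h with
  | refl => simp
  | tail _ hbc ih =>
    rename_i b c _
    have := Ideal.add_mem _ ih (Mv_sub_mem hbc)
    rwa [sub_add_sub_cancel] at this

lemma Mv_maps {S S'} (h : Mv S S') :
    S.map hd = S'.map hd ∧ S.map tl = S'.map tl ∧ S.map cl = S'.map cl := by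
  rcases h with ⟨i,k,l,k',l',T,rfl,rfl⟩ | ⟨i,k,l,k',l',T,rfl,rfl⟩ <;>
    refine ⟨?_, ?_, ?_⟩ <;>
    simp only [Multiset.map_cons, hd, tl, cl, vec4_0, vec4_1, vec4_2, vec4_3,
      show ∀ i : ZMod 2, 1+(1+i) = i from by decide, show ∀ i : ZMod 2, 1+i+1 = i from by decide,
      zero_add, add_zero] <;>
    first
      | rfl
      | rw [Multiset.cons_swap]

lemma Rel_maps {S S'} (h : Rel S S') :
    S.map hd = S'.map hd ∧ S.map tl = S'.map tl ∧ S.map cl = S'.map cl := by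
  induction h with
  | refl => exact ⟨rfl, rfl, rfl⟩
  | tail _ hbc ih =>
    obtain ⟨h1, h2, h3⟩ := Mv_maps hbc
    exact ⟨ih.1.trans h1, ih.2.1.trans h2, ih.2.2.trans h3⟩

lemma Mv_cons (x : V) {S S'} (h : Mv S S') : Mv (x ::ₘ S) (x ::ₘ S') := by
  rcases h with ⟨i,k,l,k',l',T,rfl,rfl⟩ | ⟨i,k,l,k',l',T,rfl,rfl⟩
  · exact Or.inl ⟨i,k,l,k',l', x ::ₘ T, by rw [Multiset.cons_swap x, Multiset.cons_swap x],
      by rw [Multiset.cons_swap x, Multiset.cons_swap x]⟩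
  · exact Or.inr ⟨i,k,l,k',l', x ::ₘ T, by rw [Multiset.cons_swap x, Multiset.cons_swap x],
      by rw [Multiset.cons_swap x, Multiset.cons_swap x]⟩

lemma Rel_cons (x : V) {S S'} (h : Rel S S') : Rel (x ::ₘ S) (x ::ₘ S') :=
  Relation.ReflTransGen.lift (fun y : Multiset V => x ::ₘ y) (fun _ _ hm => Mv_cons x hm) _ _ h

def mixT (x y : V) : V := ![x 0, x 1, y 2, y 3]
def mixH (x y : V) : V := ![y 0, y 1, x 2, x 3]

lemma mv_swapTails (x y : V) (T : Multiset V) (h0 : x 0 ≠ y 0)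
    (he : x 0 + x 1 = y 0 + y 1) :
    Mv (x ::ₘ y ::ₘ T) (mixT x y ::ₘ mixT y x ::ₘ T) := by
  have hz : ∀ a : ZMod 2, a = 0 ∨ a = 1 := by decide
  rcases hz (x 0) with hx0 | hx0
  · have hy0 : y 0 = 1 := (hz (y 0)).resolve_left (fun h => h0 (hx0.trans h.symm))
    have hy1 : y 1 = 1 + x 1 := by
      rw [hx0, hy0] at he
      exact (show ∀ a b : ZMod 2, 0 + a = 1 + b → b = 1 + a by decide) _ _ he
    have ex : x = ![0, x 1, x 2, x 3] := by funext j; fin_cases j <;> simp [hx0]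
    have ey : y = ![1, 1 + x 1, y 2, y 3] := by funext j; fin_cases j <;> simp [hy0, hy1]
    refine Or.inl ⟨x 1, x 2, x 3, y 2, y 3, T, ?_, ?_⟩
    · rw [← ex, ← ey]
    · have e1 : mixT x y = ![0, x 1, y 2, y 3] := by
        funext j; fin_cases j <;> simp [mixT, hx0]
      have e2 : mixT y x = ![1, 1 + x 1, x 2, x 3] := by
        funext j; fin_cases j <;> simp [mixT, hy0, hy1]
      rw [e1, e2]
  · have hy0 : y 0 = 0 := (hz (y 0)).resolve_right (fun h => h0 (hx0.trans h.symm))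
    have hx1 : x 1 = 1 + y 1 := by
      rw [hx0, hy0] at he
      exact (show ∀ a b : ZMod 2, 1 + a = 0 + b → a = 1 + b by decide) _ _ he
    have ey : y = ![0, y 1, y 2, y 3] := by funext j; fin_cases j <;> simp [hy0]
    have ex : x = ![1, 1 + y 1, x 2, x 3] := by funext j; fin_cases j <;> simp [hx0, hx1]
    refine Or.inl ⟨y 1, y 2, y 3, x 2, x 3, T, ?_, ?_⟩
    · rw [← ex, ← ey, Multiset.cons_swap]
    · have e1 : mixT y x = ![0, y 1, x 2, x 3] := by
        funext j; fin_cases j <;> simp [mixT, hy0]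
      have e2 : mixT x y = ![1, 1 + y 1, y 2, y 3] := by
        funext j; fin_cases j <;> simp [mixT, hx0, hx1]
      rw [e1, e2, Multiset.cons_swap]

lemma mv_swapHeads (x y : V) (T : Multiset V) (h3 : x 3 ≠ y 3)
    (hf : x 2 + x 3 = y 2 + y 3) :
    Mv (x ::ₘ y ::ₘ T) (mixH x y ::ₘ mixH y x ::ₘ T) := by
  have hz : ∀ a : ZMod 2, a = 0 ∨ a = 1 := by decide
  rcases hz (x 3) with hx3 | hx3
  · have hy3 : y 3 = 1 := (hz (y 3)).resolve_left (fun h => h3 (hx3.trans h.symm))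
    have hy2 : y 2 = 1 + x 2 := by
      rw [hx3, hy3] at hf
      exact (show ∀ a b : ZMod 2, a + 0 = b + 1 → b = 1 + a by decide) _ _ hf
    have ex : x = ![x 0, x 1, x 2, 0] := by funext j; fin_cases j <;> simp [hx3]
    have ey : y = ![y 0, y 1, 1 + x 2, 1] := by funext j; fin_cases j <;> simp [hy3, hy2]
    refine Or.inr ⟨x 2, x 0, x 1, y 0, y 1, T, ?_, ?_⟩
    · rw [← ex, ← ey]
    · have e1 : mixH x y = ![y 0, y 1, x 2, 0] := by
        funext j; fin_cases j <;> simp [mixH, hx3]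
      have e2 : mixH y x = ![x 0, x 1, 1 + x 2, 1] := by
        funext j; fin_cases j <;> simp [mixH, hy3, hy2]
      rw [e1, e2]
  · have hy3 : y 3 = 0 := (hz (y 3)).resolve_right (fun h => h3 (hx3.trans h.symm))
    have hx2 : x 2 = 1 + y 2 := by
      rw [hx3, hy3] at hf
      exact (show ∀ a b : ZMod 2, a + 1 = b + 0 → a = 1 + b by decide) _ _ hf
    have ey : y = ![y 0, y 1, y 2, 0] := by funext j; fin_cases j <;> simp [hy3]
    have ex : x = ![x 0, x 1, 1 + y 2, 1] := by funext j; fin_cases j <;> simp [hx3, hx2]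
    refine Or.inr ⟨y 2, y 0, y 1, x 0, x 1, T, ?_, ?_⟩
    · rw [← ex, ← ey, Multiset.cons_swap]
    · have e1 : mixH y x = ![x 0, x 1, y 2, 0] := by
        funext j; fin_cases j <;> simp [mixH, hy3]
      have e2 : mixH x y = ![y 0, y 1, 1 + y 2, 1] := by
        funext j; fin_cases j <;> simp [mixH, hx3, hx2]
      rw [e1, e2, Multiset.cons_swap]
lemma reach (v : V) (S' : Multiset V) (hh : hd v ∈ S'.map hd) (ht : tl v ∈ S'.map tl)
    (hc : cl v ∈ S'.map cl) : ∃ S'', Rel S' S'' ∧ v ∈ S'' := by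
  obtain ⟨a, haS, ha⟩ := Multiset.mem_map.mp hh
  obtain ⟨c, hcS, hcc⟩ := Multiset.mem_map.mp hc
  have ha0 : a 0 = v 0 := congrArg Prod.fst ha
  have ha1 : a 1 = v 1 := congrArg Prod.snd ha
  obtain ⟨T1, hRel1, w, hwT, hwhd, hwcl⟩ :
      ∃ T1, Rel S' T1 ∧ ∃ w ∈ T1, hd w = hd v ∧ cl w = cl v := by
    by_cases hac : cl a = cl v
    · exact ⟨S', Relation.ReflTransGen.refl, a, haS, ha, hac⟩
    by_cases hdc : hd c = hd a
    · exact ⟨S', Relation.ReflTransGen.refl, c, hcS, hdc.trans ha, hcc⟩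
    have hne : c ≠ a := fun h => hac (by rw [← h]; exact hcc)
    obtain ⟨U, hU⟩ : ∃ U, S' = a ::ₘ c ::ₘ U := by
      have h1 : c ∈ S'.erase a := (Multiset.mem_erase_of_ne hne).mpr hcS
      obtain ⟨U, hU2⟩ := Multiset.exists_cons_of_mem h1
      exact ⟨U, by rw [← Multiset.cons_erase haS, hU2]⟩
    have hcl1 : c 0 + c 1 = v 0 + v 1 := (Prod.ext_iff.mp hcc).1
    have hcl2 : c 2 + c 3 = v 2 + v 3 := (Prod.ext_iff.mp hcc).2
    have he : a 0 + a 1 = c 0 + c 1 := by rw [ha0, ha1, hcl1]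
    have h0 : a 0 ≠ c 0 := by
      intro h
      have h1 : a 1 = c 1 :=
        (show ∀ p q r s : ZMod 2, p = r → p + q = r + s → q = s from by decide) _ _ _ _ h he
      exact hdc (show (c 0, c 1) = (a 0, a 1) from by rw [h, h1])
    refine ⟨mixT a c ::ₘ mixT c a ::ₘ U,
      Relation.ReflTransGen.single (by rw [hU]; exact mv_swapTails a c U h0 he),
      mixT a c, Multiset.mem_cons_self _ _, ?_, ?_⟩
    · exact ha
    · show (a 0 + a 1, c 2 + c 3) = cl v
      rw [ha0, ha1, hcl2]; rfl
  have ht1 : tl v ∈ T1.map tl := by rw [← (Rel_maps hRel1).2.1]; exact ht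
  obtain ⟨b, hbT, hb⟩ := Multiset.mem_map.mp ht1
  by_cases hwt : tl w = tl v
  · exact ⟨T1, hRel1, (hdtl_ext hwhd hwt) ▸ hwT⟩
  have hbw : b ≠ w := fun h => hwt (by rw [← h]; exact hb)
  obtain ⟨U2, hU2⟩ : ∃ U2, T1 = w ::ₘ b ::ₘ U2 := by
    have h1 : b ∈ T1.erase w := (Multiset.mem_erase_of_ne hbw).mpr hbT
    obtain ⟨U2, hU22⟩ := Multiset.exists_cons_of_mem h1
    exact ⟨U2, by rw [← Multiset.cons_erase hwT, hU22]⟩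
  have hb2 : b 2 = v 2 := (Prod.ext_iff.mp hb).1
  have hb3 : b 3 = v 3 := (Prod.ext_iff.mp hb).2
  have hwcl2 : w 2 + w 3 = v 2 + v 3 := (Prod.ext_iff.mp hwcl).2
  have hf : w 2 + w 3 = b 2 + b 3 := by rw [hb2, hb3, hwcl2]
  have h3 : w 3 ≠ b 3 := by
    intro h
    have h2 : w 2 = b 2 :=
      (show ∀ p q r s : ZMod 2, q = s → p + q = r + s → p = r from by decide) _ _ _ _ h hf
    exact hwt (show (w 2, w 3) = tl v from by rw [h2, h, hb2, hb3]; rfl)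
  refine ⟨mixH w b ::ₘ mixH b w ::ₘ U2,
    hRel1.tail (show Mv T1 _ from by rw [hU2]; exact mv_swapHeads w b U2 h3 hf), ?_⟩
  have hv : mixH b w = v := by
    refine hdtl_ext (show (w 0, w 1) = hd v from hwhd) (show (b 2, b 3) = tl v from hb)
  rw [← hv]
  exact Multiset.mem_cons_of_mem (Multiset.mem_cons_self _ _)
lemma conn : ∀ (n : ℕ) (S S' : Multiset V), S.card = n →
    S.map hd = S'.map hd → S.map tl = S'.map tl → S.map cl = S'.map cl →
    Pm S - Pm S' ∈ Ideal.span jc4Minors := by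
  intro n
  induction n with
  | zero =>
    intro S S' hc h1 _ _
    have hS : S = 0 := Multiset.card_eq_zero.mp hc
    have hS' : S' = 0 := by
      rw [hS] at h1
      simpa [Multiset.map_eq_zero] using h1.symm
    rw [hS, hS']; simp
  | succ n ih =>
    intro S S' hcard h1 h2 h3
    obtain ⟨v, hv⟩ := Multiset.card_pos_iff_exists_mem.mp (by rw [hcard]; omega)
    obtain ⟨S'', hRel, hvS''⟩ := reach v S'
      (h1 ▸ Multiset.mem_map_of_mem hd hv)
      (h2 ▸ Multiset.mem_map_of_mem tl hv)
      (h3 ▸ Multiset.mem_map_of_mem cl hv)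
    obtain ⟨T, hT⟩ := Multiset.exists_cons_of_mem hv
    obtain ⟨T'', hT''⟩ := Multiset.exists_cons_of_mem hvS''
    obtain ⟨m1, m2, m3⟩ := Rel_maps hRel
    rw [hT''] at m1 m2 m3
    rw [hT] at h1 h2 h3
    rw [← h1, Multiset.map_cons, Multiset.map_cons] at m1
    rw [← h2, Multiset.map_cons, Multiset.map_cons] at m2
    rw [← h3, Multiset.map_cons, Multiset.map_cons] at m3
    have e1 := (Multiset.cons_inj_right _).mp m1
    have e2 := (Multiset.cons_inj_right _).mp m2
    have e3 := (Multiset.cons_inj_right _).mp m3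
    have hTcard : T.card = n := by
      have := congrArg Multiset.card hT
      simp [Multiset.card_cons] at this
      omega
    have hI : Pm T - Pm T'' ∈ Ideal.span jc4Minors := ih T T'' hTcard e1 e2 e3
    have key1 : Pm S - Pm S'' ∈ Ideal.span jc4Minors := by
      have e : Pm S - Pm S'' = X v * (Pm T - Pm T'') := by
        rw [hT, hT'']
        simp only [Pm, Multiset.map_cons, Multiset.prod_cons]
        ring
      rw [e]
      exact Ideal.mul_mem_left _ _ hI
    have key2 : Pm S'' - Pm S' ∈ Ideal.span jc4Minors := by
      have := (Ideal.span jc4Minors).neg_mem (Rel_sub_mem hRel)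
      simpa using this
    have := Ideal.add_mem _ key1 key2
    rwa [sub_add_sub_cancel] at this
lemma countP_congr' (p q : V → Prop) [DecidablePred p] [DecidablePred q]
    (h : ∀ v, p v ↔ q v) (S : Multiset V) : S.countP p = S.countP q :=
  Multiset.countP_congr rfl (fun v _ => propext (h v))

lemma countP_split (p q : V → Prop) [DecidablePred p] [DecidablePred q] (S : Multiset V) :
    S.countP p = S.countP (fun v => p v ∧ q v) + S.countP (fun v => p v ∧ ¬ q v) := by
  induction S using Multiset.induction with
  | empty => simp
  | cons a S ih =>
    by_cases hp : p a <;> by_cases hq : q a <;>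
      simp [Multiset.countP_cons, hp, hq, ih] <;> omega

lemma map_pair_eq (x y : V → ZMod 2) (S S' : Multiset V)
    (h1 : ∀ s, S.countP (fun v => x v = s) = S'.countP (fun v => x v = s))
    (h2 : ∀ s, S.countP (fun v => y v = s) = S'.countP (fun v => y v = s))
    (h3 : ∀ s, S.countP (fun v => x v + y v = s) = S'.countP (fun v => x v + y v = s)) :
    S.map (fun v => (x v, y v)) = S'.map (fun v => (x v, y v)) := by
  have d1 : ∀ (M : Multiset V) s, M.countP (fun v => x v = s)
      = M.countP (fun v => x v = s ∧ y v = 0) + M.countP (fun v => x v = s ∧ y v = 1) := by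
    intro M s
    rw [countP_split (fun v => x v = s) (fun v => y v = 0)]
    congr 1
    refine countP_congr' _ _ (fun v => ?_) M
    have : ∀ b : ZMod 2, ¬ b = 0 ↔ b = 1 := by decide
    rw [this (y v)]
  have d2 : ∀ (M : Multiset V) t, M.countP (fun v => y v = t)
      = M.countP (fun v => x v = 0 ∧ y v = t) + M.countP (fun v => x v = 1 ∧ y v = t) := by
    intro M t
    rw [countP_split (fun v => y v = t) (fun v => x v = 0)]
    congr 1
    · exact countP_congr' _ _ (fun v => and_comm) M
    · refine countP_congr' _ _ (fun v => ?_) M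
      have : ∀ a : ZMod 2, ¬ a = 0 ↔ a = 1 := by decide
      rw [this (x v), and_comm]
  have d3 : ∀ (M : Multiset V), M.countP (fun v => x v + y v = 0)
      = M.countP (fun v => x v = 0 ∧ y v = 0) + M.countP (fun v => x v = 1 ∧ y v = 1) := by
    intro M
    rw [countP_split (fun v => x v + y v = 0) (fun v => x v = 0)]
    congr 1
    · refine countP_congr' _ _ (fun v => ?_) M
      exact (show ∀ a b : ZMod 2, (a + b = 0 ∧ a = 0 ↔ a = 0 ∧ b = 0) from by decide) (x v) (y v)
    · refine countP_congr' _ _ (fun v => ?_) M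
      exact (show ∀ a b : ZMod 2, (a + b = 0 ∧ ¬ a = 0 ↔ a = 1 ∧ b = 1) from by decide) (x v) (y v)
  have d4 : ∀ (M : Multiset V), M.countP (fun v => x v + y v = 1)
      = M.countP (fun v => x v = 0 ∧ y v = 1) + M.countP (fun v => x v = 1 ∧ y v = 0) := by
    intro M
    rw [countP_split (fun v => x v + y v = 1) (fun v => x v = 0)]
    congr 1
    · refine countP_congr' _ _ (fun v => ?_) M
      exact (show ∀ a b : ZMod 2, (a + b = 1 ∧ a = 0 ↔ a = 0 ∧ b = 1) from by decide) (x v) (y v)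
    · refine countP_congr' _ _ (fun v => ?_) M
      exact (show ∀ a b : ZMod 2, (a + b = 1 ∧ ¬ a = 0 ↔ a = 1 ∧ b = 0) from by decide) (x v) (y v)
  have key : ∀ s t : ZMod 2, S.countP (fun v => x v = s ∧ y v = t)
      = S'.countP (fun v => x v = s ∧ y v = t) := by
    have q1 := h1 0; have q2 := h1 1; have q3 := h2 0; have q4 := h2 1
    have q5 := h3 0; have q6 := h3 1
    rw [d1 S 0, d1 S' 0] at q1
    rw [d1 S 1, d1 S' 1] at q2
    rw [d2 S 0, d2 S' 0] at q3
    rw [d2 S 1, d2 S' 1] at q4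
    rw [d3 S, d3 S'] at q5
    rw [d4 S, d4 S'] at q6
    intro s t
    have hz : ∀ a : ZMod 2, a = 0 ∨ a = 1 := by decide
    rcases hz s with rfl | rfl <;> rcases hz t with rfl | rfl <;> omega
  rw [Multiset.ext]
  intro p
  obtain ⟨s, t⟩ := p
  rw [Multiset.count_map, Multiset.count_map, ← Multiset.countP_eq_card_filter,
    ← Multiset.countP_eq_card_filter]
  have e : ∀ (M : Multiset V), M.countP (fun a => (s, t) = (x a, y a))
      = M.countP (fun v => x v = s ∧ y v = t) := by
    intro M
    refine countP_congr' _ _ (fun v => ?_) M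
    rw [Prod.ext_iff]
    constructor
    · rintro ⟨hs, ht⟩; exact ⟨hs.symm, ht.symm⟩
    · rintro ⟨hs, ht⟩; exact ⟨hs.symm, ht.symm⟩
  rw [e S, e S', key]
lemma maps_of_WS_eq {S S' : Multiset V} (h : WS S = WS S') :
    S.map hd = S'.map hd ∧ S.map tl = S'.map tl ∧ S.map cl = S'.map cl := by
  have hc : ∀ (i : Fin 7) (s : ZMod 2),
      S.countP (fun v => coord i v = s) = S'.countP (fun v => coord i v = s) := by
    intro i s
    have h1 := WS_apply S i s
    have h2 := WS_apply S' i s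
    rw [← h1, ← h2, h]
  refine ⟨?_, ?_, ?_⟩
  · exact map_pair_eq (fun v => v 0) (fun v => v 1) S S' (hc 0) (hc 1) (hc 4)
  · exact map_pair_eq (fun v => v 2) (fun v => v 3) S S' (hc 2) (hc 3) (hc 5)
  · refine map_pair_eq (fun v => v 0 + v 1) (fun v => v 2 + v 3) S S' (hc 4) (hc 5) ?_
    intro s
    have e : ∀ (M : Multiset V), M.countP (fun v => (v 0 + v 1) + (v 2 + v 3) = s)
        = M.countP (fun v => coord 6 v = s) := by
      intro M
      refine countP_congr' _ _ (fun v => ?_) M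
      have : (v 0 + v 1) + (v 2 + v 3) = v 0 + v 1 + v 2 + v 3 := by ring
      rw [this]; rfl
    rw [e S, e S']
    exact hc 6 s

lemma Pm_sub_mem {S S' : Multiset V} (h : WS S = WS S') :
    Pm S - Pm S' ∈ Ideal.span jc4Minors := by
  obtain ⟨m1, m2, m3⟩ := maps_of_WS_eq h
  exact conn S.card S S' rfl m1 m2 m3

noncomputable def Wm (m : V →₀ ℕ) : (Fin 7 × ZMod 2) →₀ ℕ := WS m.toMultiset

lemma monomial_eq_Pm (m : V →₀ ℕ) :
    (monomial m (1:ℂ) : MvPolynomial V ℂ) = Pm m.toMultiset := by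
  induction m using Finsupp.induction with
  | zero => simp [Pm]
  | single_add a b f ha hb ih =>
    rw [Finsupp.toMultiset_add, Finsupp.toMultiset_single]
    have hrep : (b • ({a} : Multiset V)) = Multiset.replicate b a := by
      rw [Multiset.nsmul_singleton]
    rw [hrep]
    have e : Pm (Multiset.replicate b a + f.toMultiset) = X a ^ b * Pm f.toMultiset := by
      simp [Pm, Multiset.map_replicate, Multiset.prod_replicate]
    rw [e, ← ih, monomial_single_add]

lemma phi_monomial (m : V →₀ ℕ) :
    phiJC4 (monomial m (1:ℂ)) = monomial (Wm m) 1 := by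
  rw [monomial_eq_Pm, phi_Pm]; rfl

lemma ker_sub_span : ∀ (n : ℕ) (p : MvPolynomial V ℂ), p.support.card ≤ n →
    phiJC4 p = 0 → p ∈ Ideal.span jc4Minors := by
  intro n
  induction n with
  | zero =>
    intro p h _
    have : p = 0 := support_eq_empty.mp (Finset.card_eq_zero.mp (Nat.le_zero.mp h))
    simp [this]
  | succ n ih =>
    intro p hcard h0
    by_cases hp0 : p = 0
    · simp [hp0]
    obtain ⟨m, hm⟩ := support_nonempty.mpr hp0
    have hexp : phiJC4 p = ∑ u ∈ p.support, (coeff u p) • (monomial (Wm u) (1:ℂ)) := by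
      conv_lhs => rw [p.as_sum]
      rw [map_sum]
      refine Finset.sum_congr rfl (fun u _ => ?_)
      rw [show (monomial u) (coeff u p) = (coeff u p) • (monomial u (1:ℂ)) from by
        rw [smul_monomial, smul_eq_mul, mul_one]]
      rw [map_smul, phi_monomial]
    have hco : ∑ u ∈ p.support, (coeff u p) * (if Wm u = Wm m then 1 else 0) = 0 := by
      have h1 : coeff (Wm m) (∑ u ∈ p.support, (coeff u p) • (monomial (Wm u) (1:ℂ))) = 0 := by
        rw [← hexp, h0, coeff_zero]
      rw [coeff_sum] at h1
      have h2 : ∀ x ∈ p.support, coeff (Wm m) (coeff x p • (monomial (Wm x)) (1:ℂ))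
          = coeff x p * (if Wm x = Wm m then 1 else 0) := by
        intro x _
        rw [coeff_smul, coeff_monomial, smul_eq_mul]
      rw [Finset.sum_congr rfl h2] at h1
      exact h1
    obtain ⟨u, hu, hune, hWu⟩ : ∃ u ∈ p.support, u ≠ m ∧ Wm u = Wm m := by
      by_contra hcon
      push_neg at hcon
      rw [← Finset.add_sum_erase _ _ hm] at hco
      have hz : ∑ u ∈ p.support.erase m, coeff u p * (if Wm u = Wm m then 1 else 0) = 0 := by
        apply Finset.sum_eq_zero
        intro u hu
        rw [if_neg (hcon u (Finset.mem_of_mem_erase hu) (Finset.ne_of_mem_erase hu)), mul_zero]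
      rw [hz, add_zero, if_pos rfl, mul_one] at hco
      exact (mem_support_iff.mp hm) hco
    set c := coeff m p with hc
    set q := p - c • (monomial m 1 - monomial u 1) with hq
    have hφq : phiJC4 q = 0 := by
      rw [hq, map_sub, map_smul, map_sub, phi_monomial, phi_monomial, hWu, sub_self,
        smul_zero, sub_zero, h0]
    have hsupp : q.support ⊆ p.support.erase m := by
      intro t ht
      rw [mem_support_iff] at ht
      have hct : coeff t q = coeff t p
          - c * ((if m = t then 1 else 0) - (if u = t then 1 else 0)) := by
        rw [hq, coeff_sub, coeff_smul, coeff_sub, coeff_monomial, coeff_monomial, smul_eq_mul]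
      have htm : t ≠ m := by
        rintro rfl
        rw [if_pos rfl, if_neg hune, ← hc] at hct
        apply ht
        rw [hct]
        ring
      rw [Finset.mem_erase, mem_support_iff]
      refine ⟨htm, ?_⟩
      intro hcp
      apply ht
      have htu : t ≠ u := by
        rintro rfl
        exact (mem_support_iff.mp hu) hcp
      rw [hct, hcp, if_neg (fun h => htm h.symm), if_neg (fun h => htu h.symm)]
      ring
    have hqcard : q.support.card ≤ n := by
      have h2 := Finset.card_le_card hsupp
      rw [Finset.card_erase_of_mem hm] at h2
      omega
    have hqI := ih q hqcard hφq
    have hbin : (monomial m (1:ℂ) - monomial u 1) ∈ Ideal.span jc4Minors := by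
      rw [monomial_eq_Pm, monomial_eq_Pm]
      exact Pm_sub_mem hWu.symm
    have hpq : p = q + c • (monomial m 1 - monomial u 1) := (sub_add_cancel _ _).symm
    rw [hpq]
    refine Ideal.add_mem _ hqI ?_
    rw [smul_eq_C_mul]
    exact Ideal.mul_mem_left _ _ hbin

end JC4

/-- **Example.** The ideal of phylogenetic invariants of the Jukes–Cantor binary model on
the balanced binary tree with four leaves is generated by the `2 × 2` minors of the four
`2 × 4` matrices above. -/
theorem ker_phiJC4_eq_span_minors :
    RingHom.ker phiJC4 = Ideal.span jc4Minors := by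
  apply le_antisymm
  · intro p hp
    exact JC4.ker_sub_span _ p le_rfl hp
  · rw [Ideal.span_le]
    rintro p hp
    simp only [SetLike.mem_coe, RingHom.mem_ker]
    have hz : ∀ i : ZMod 2, 1 + (1 + i) = i := by decide
    have hz2 : ∀ i : ZMod 2, 1 + i + 1 = i := by decide
    have hz3 : ∀ a b i : ZMod 2, a + b + (1 + i) + 1 = a + b + i := by decide
    rcases hp with ⟨i,k,l,k',l',rfl⟩ | ⟨i,k,l,k',l',rfl⟩ <;>
    · simp only [map_sub, map_mul, phiJC4, aeval_X, JC4.vec4_0, JC4.vec4_1, JC4.vec4_2,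
        JC4.vec4_3, hz, hz2, hz3, zero_add, add_zero]
      rw [sub_eq_zero]
      ring
end
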